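/- arXiv:2212.09412 — 3 statements merged into one kernel-verified Lean document; each statement's English description precedes it below -/
import Mathlib

section
/- Under the Setup, the degenerated (nearest-neighbor) model recovers the true token with probability tending to 1 in the joint limit β̄ → 0, d → ∞: for every δ > 0 there exist β̄₀ > 0 and d₀ ∈ ℕ such that for all β̄ ∈ (0, β̄₀) and all d ≥ d₀, the probability of the event { for every token index i ≠ y, ℓ(z_t, y) < ℓ(z_t, i) } is greater than 1 − δ; on this event the index y is the unique minimizer of i ↦ ℓ(z_t, i), so the degenerated model's output equals z₀. (Lemma 2.) -/
open MeasureTheory ProbabilityTheory Finset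
open scoped NNReal ENNReal

/-- The per-token loss `ℓ(z, i) = (1/d)·‖z − e_i‖² − log softmax_i(⟪z, e_·⟫)`,
where `e : Fin V → Fin d → ℝ` are the embeddings. -/
noncomputable def tokenLoss {V d : ℕ} (e : Fin V → Fin d → ℝ) (z : Fin d → ℝ) (i : Fin V) : ℝ :=
  (1 / (d : ℝ)) * ∑ j, (z j - e i j) ^ 2
    - Real.log (Real.exp (∑ j, z j * e i j) / ∑ k : Fin V, Real.exp (∑ j, z j * e k j))

/-- The noised embedding `z_t = √(1−β̄)·z₀ + √β̄·ε`. -/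
noncomputable def noised {d : ℕ} (βb : ℝ) (z0 ε : Fin d → ℝ) : Fin d → ℝ :=
  fun j => Real.sqrt (1 - βb) * z0 j + Real.sqrt βb * ε j

section Aux
open Real

lemma pow_exp_Ioi {b : ℝ} (hb : 0 < b) (n : ℕ) :
    ∫ x in Set.Ioi (0:ℝ), x ^ n * Real.exp (-b * x ^ 2) =
      b ^ (-((n:ℝ) + 1) / 2) * (1 / 2) * Real.Gamma (((n:ℝ) + 1) / 2) := by
  rw [← integral_rpow_mul_exp_neg_mul_rpow two_pos
    (show (-1:ℝ) < (n:ℝ) by nlinarith [Nat.cast_nonneg (α := ℝ) n]) hb]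
  refine setIntegral_congr_fun measurableSet_Ioi fun x hx => ?_
  rw [Real.rpow_natCast, show ((2:ℝ)) = ((2:ℕ):ℝ) by norm_num, Real.rpow_natCast]

lemma gamma32 : Real.Gamma (3/2) = Real.sqrt π / 2 := by
  have := Real.Gamma_add_one (s := 1/2) (by norm_num)
  rw [show (3:ℝ)/2 = 1/2 + 1 by norm_num, this, Real.Gamma_one_half_eq]; ring

lemma gamma52 : Real.Gamma (5/2) = 3 * Real.sqrt π / 4 := by
  have := Real.Gamma_add_one (s := 3/2) (by norm_num)
  rw [show (5:ℝ)/2 = 3/2 + 1 by norm_num, this, gamma32]; ring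

lemma odd1_exp_line {b : ℝ} (hb : 0 < b) :
    ∫ x : ℝ, x * Real.exp (-b * x ^ 2) = 0 := by
  have h := integral_neg_eq_self (fun x : ℝ => x * Real.exp (-b * x ^ 2)) (volume : Measure ℝ)
  simp only [neg_sq, neg_mul] at h
  rw [MeasureTheory.integral_neg] at h
  simp only [neg_mul]
  linarith

lemma even_line {b : ℝ} (hb : 0 < b) (n : ℕ) :
    ∫ x : ℝ, x ^ (2*n) * Real.exp (-b * x ^ 2) =
      2 * ∫ x in Set.Ioi (0:ℝ), x ^ (2*n) * Real.exp (-b * x ^ 2) := by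
  rw [← integral_comp_abs (f := fun x => x ^ (2*n) * Real.exp (-b * x ^ 2))]
  congr 1 with x
  rw [pow_mul, pow_mul, sq_abs]

open ProbabilityTheory

lemma integral_gaussianReal_eq (v : ℝ≥0) (hv : v ≠ 0) (g : ℝ → ℝ) :
    ∫ x, g x ∂(gaussianReal 0 v) = ∫ x, gaussianPDFReal 0 v x * g x := by
  rw [gaussianReal_of_var_ne_zero 0 hv]
  have : (gaussianPDF 0 v) = fun x => ((gaussianPDFReal 0 v x).toNNReal : ℝ≥0∞) := rfl
  rw [this, integral_withDensity_eq_integral_smul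
    (measurable_gaussianPDFReal 0 v).real_toNNReal g]
  congr 1 with x
  rw [NNReal.smul_def, Real.coe_toNNReal _ (gaussianPDFReal_nonneg 0 v x), smul_eq_mul]

lemma integrable_pow_gaussianReal (v : ℝ≥0) (hv : v ≠ 0) (n : ℕ) :
    Integrable (fun x => x ^ n) (gaussianReal 0 v) := by
  rw [gaussianReal_of_var_ne_zero 0 hv]
  have : (gaussianPDF 0 v) = fun x => ((gaussianPDFReal 0 v x).toNNReal : ℝ≥0∞) := rfl
  rw [this, integrable_withDensity_iff_integrable_smul
    (measurable_gaussianPDFReal 0 v).real_toNNReal]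
  have hb : 0 < ((2:ℝ) * v)⁻¹ := by
    have : 0 < (v:ℝ) := by exact_mod_cast pos_iff_ne_zero.mpr hv
    positivity
  have hI : Integrable (fun x : ℝ => x ^ n * Real.exp (-((2:ℝ)*v)⁻¹ * x ^ 2)) := by
    have := integrable_rpow_mul_exp_neg_mul_sq hb
      (show (-1:ℝ) < (n:ℝ) by nlinarith [Nat.cast_nonneg (α := ℝ) n])
    simpa [Real.rpow_natCast] using this
  apply Integrable.mono' (hI.abs.const_mul (√(2 * π * v))⁻¹)
  · exact ((measurable_gaussianPDFReal 0 v).real_toNNReal.coe_nnreal_real.mul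
      (measurable_id.pow_const n)).aestronglyMeasurable
  · refine ae_of_all _ fun x => ?_
    rw [NNReal.smul_def, Real.coe_toNNReal _ (gaussianPDFReal_nonneg 0 v x), smul_eq_mul,
      Real.norm_eq_abs, abs_mul, abs_of_nonneg (gaussianPDFReal_nonneg 0 v x), gaussianPDFReal,
      abs_mul, abs_of_pos (Real.exp_pos _)]
    simp only [sub_zero]
    have hexp : Real.exp (-x^2/(2*(v:ℝ))) = Real.exp (-((2:ℝ)*v)⁻¹ * x^2) := by
      congr 1; field_simp
    exact le_of_eq (by rw [hexp]; ring)

lemma gaussian_moment (v : ℝ≥0) (hv : v ≠ 0) (n : ℕ) :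
    ∫ x, x ^ n ∂(gaussianReal 0 v) =
      (√(2*π*v))⁻¹ * ∫ x : ℝ, x ^ n * Real.exp (-((2:ℝ)*v)⁻¹ * x^2) := by
  have hvpos : 0 < (v:ℝ) := by exact_mod_cast pos_iff_ne_zero.mpr hv
  rw [integral_gaussianReal_eq v hv, ← integral_const_mul]
  congr 1 with x
  rw [gaussianPDFReal]
  simp only [sub_zero]
  have hexp : Real.exp (-x^2/(2*(v:ℝ))) = Real.exp (-((2:ℝ)*v)⁻¹ * x^2) := by
    congr 1; field_simp
  rw [hexp]; ring

lemma rpow_inv_sq {s : ℝ} (hs : 0 < s) (y : ℝ) : ((s^2)⁻¹) ^ (-y) = s ^ (2*y) := by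
  rw [Real.inv_rpow (sq_nonneg s), Real.rpow_neg (sq_nonneg s), inv_inv,
    ← Real.rpow_natCast s 2, ← Real.rpow_mul hs.le]
  norm_num

lemma sqrt2piv (v : ℝ≥0) : √(2*π*(v:ℝ)) = √(2*(v:ℝ)) * √π := by
  rw [← Real.sqrt_mul (by positivity)]
  ring_nf

lemma integral_id_gaussianReal (v : ℝ≥0) (hv : v ≠ 0) :
    ∫ x, x ∂(gaussianReal 0 v) = 0 := by
  have hvpos : 0 < (v:ℝ) := by exact_mod_cast pos_iff_ne_zero.mpr hv
  have hb : 0 < ((2:ℝ)*v)⁻¹ := by positivity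
  have := gaussian_moment v hv 1
  simp only [pow_one] at this
  rw [this, odd1_exp_line hb, mul_zero]

lemma integral_sq_gaussianReal (v : ℝ≥0) (hv : v ≠ 0) :
    ∫ x, x ^ 2 ∂(gaussianReal 0 v) = v := by
  have hvpos : 0 < (v:ℝ) := by exact_mod_cast pos_iff_ne_zero.mpr hv
  set s := √(2*(v:ℝ)) with hsdef
  have hspos : 0 < s := Real.sqrt_pos.mpr (by positivity)
  have hs2 : s^2 = 2*(v:ℝ) := Real.sq_sqrt (by positivity)
  have hb : 0 < ((2:ℝ)*v)⁻¹ := by positivity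
  have hkey : ((2:ℝ)*(v:ℝ))⁻¹ ^ (-(((2:ℕ):ℝ)+1)/2) = s ^ (3:ℕ) := by
    rw [← hs2, show (-(((2:ℕ):ℝ)+1)/2) = -(3/2 : ℝ) by norm_num, rpow_inv_sq hspos,
      show (2:ℝ)*(3/2) = ((3:ℕ):ℝ) by norm_num, Real.rpow_natCast]
  rw [gaussian_moment v hv 2, show (2:ℕ) = 2*1 by norm_num, even_line hb 1,
    show 2*1 = (2:ℕ) by norm_num, pow_exp_Ioi hb 2, hkey,
    show (((2:ℕ):ℝ)+1)/2 = (3:ℝ)/2 by norm_num, gamma32, sqrt2piv]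
  have hπ : 0 < √π := Real.sqrt_pos.mpr Real.pi_pos
  rw [show ((v:ℝ)) = s^2/2 by linarith [hs2]]
  rw [show (2:ℝ)*(s^2/2) = s^2 by ring, Real.sqrt_sq hspos.le]
  field_simp

lemma integral_pow4_gaussianReal (v : ℝ≥0) (hv : v ≠ 0) :
    ∫ x, x ^ 4 ∂(gaussianReal 0 v) = 3*(v:ℝ)^2 := by
  have hvpos : 0 < (v:ℝ) := by exact_mod_cast pos_iff_ne_zero.mpr hv
  set s := √(2*(v:ℝ)) with hsdef
  have hspos : 0 < s := Real.sqrt_pos.mpr (by positivity)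
  have hs2 : s^2 = 2*(v:ℝ) := Real.sq_sqrt (by positivity)
  have hb : 0 < ((2:ℝ)*v)⁻¹ := by positivity
  have hkey : ((2:ℝ)*(v:ℝ))⁻¹ ^ (-(((4:ℕ):ℝ)+1)/2) = s ^ (5:ℕ) := by
    rw [← hs2, show (-(((4:ℕ):ℝ)+1)/2) = -(5/2 : ℝ) by norm_num, rpow_inv_sq hspos,
      show (2:ℝ)*(5/2) = ((5:ℕ):ℝ) by norm_num, Real.rpow_natCast]
  rw [gaussian_moment v hv 4, show (4:ℕ) = 2*2 by norm_num, even_line hb 2,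
    show 2*2 = (4:ℕ) by norm_num, pow_exp_Ioi hb 4, hkey,
    show (((4:ℕ):ℝ)+1)/2 = (5:ℝ)/2 by norm_num, gamma52, sqrt2piv]
  have hπ : 0 < √π := Real.sqrt_pos.mpr Real.pi_pos
  rw [show ((v:ℝ)) = s^2/2 by linarith [hs2]]
  rw [show (2:ℝ)*(s^2/2) = s^2 by ring, Real.sqrt_sq hspos.le]
  field_simp
  ring

variable {Ω : Type} [MeasurableSpace Ω]

lemma map_moment {P : Measure Ω} {X : Ω → ℝ} (hX : Measurable X) {v : ℝ≥0}
    (hmap : P.map X = gaussianReal 0 v) (n : ℕ) :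
    ∫ ω, (X ω) ^ n ∂P = ∫ x, x ^ n ∂(gaussianReal 0 v) := by
  rw [← hmap, integral_map hX.aemeasurable]
  exact (measurable_id.pow_const n).aestronglyMeasurable

lemma map_integrable {P : Measure Ω} {X : Ω → ℝ} (hX : Measurable X) {v : ℝ≥0}
    (hv : v ≠ 0) (hmap : P.map X = gaussianReal 0 v) (n : ℕ) :
    Integrable (fun ω => (X ω) ^ n) P := by
  have h := integrable_pow_gaussianReal v hv n
  rw [← hmap] at h
  exact (integrable_map_measure (measurable_id.pow_const n).aestronglyMeasurable
    hX.aemeasurable).mp h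

/-- Chebyshev/Markov on the square. -/
lemma cheb (P : Measure Ω) [IsProbabilityMeasure P] {X : Ω → ℝ} {c M : ℝ}
    (hc : 0 < c) (hint : Integrable (fun ω => X ω ^ 2) P)
    (hM : ∫ ω, X ω ^ 2 ∂P ≤ M) :
    P {ω | c ≤ |X ω|} ≤ ENNReal.ofReal (M / c^2) := by
  have hset : {ω | c ≤ |X ω|} = {ω | c^2 ≤ X ω ^ 2} := by
    ext ω
    simp only [Set.mem_setOf_eq]
    constructor
    · intro h
      have := pow_le_pow_left₀ hc.le h 2
      rwa [sq_abs] at this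
    · intro h
      by_contra hcon
      push_neg at hcon
      nlinarith [abs_nonneg (X ω), sq_abs (X ω)]
  have hmk := mul_meas_ge_le_integral_of_nonneg
    (ae_of_all P fun ω => sq_nonneg (X ω)) hint (c^2)
  rw [hset]
  have hne : P {ω | c^2 ≤ X ω ^ 2} ≠ ⊤ := measure_ne_top P _
  rw [← ENNReal.ofReal_toReal hne]
  refine ENNReal.ofReal_le_ofReal ?_
  rw [le_div_iff₀ (by positivity), mul_comm]
  calc c^2 * (P {ω | c^2 ≤ X ω ^ 2}).toReal ≤ ∫ ω, X ω ^ 2 ∂P := hmk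
  _ ≤ M := hM

/-- Second moment of a sum of pairwise "uncorrelated" variables. -/
lemma sum_sq_bound (P : Measure Ω) [IsProbabilityMeasure P] {d : ℕ}
    (Y : Fin d → Ω → ℝ) (M : ℝ)
    (hdiag : ∀ j, Integrable (fun ω => Y j ω * Y j ω) P ∧ ∫ ω, Y j ω * Y j ω ∂P ≤ M)
    (hcross : ∀ j j', j ≠ j' →
      Integrable (fun ω => Y j ω * Y j' ω) P ∧ ∫ ω, Y j ω * Y j' ω ∂P = 0) :
    Integrable (fun ω => (∑ j, Y j ω)^2) P ∧ ∫ ω, (∑ j, Y j ω)^2 ∂P ≤ d * M := by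
  have hexp : ∀ ω, (∑ j, Y j ω)^2 = ∑ j, ∑ j', Y j ω * Y j' ω := by
    intro ω
    rw [sq, Finset.sum_mul_sum]
  have hint : ∀ (j j' : Fin d), Integrable (fun ω => Y j ω * Y j' ω) P := by
    intro j j'
    by_cases h : j = j'
    · subst h; exact (hdiag j).1
    · exact (hcross j j' h).1
  have hInt : Integrable (fun ω => (∑ j, Y j ω)^2) P := by
    simp only [hexp]
    exact integrable_finset_sum _ fun j _ => integrable_finset_sum _ fun j' _ => hint j j'
  refine ⟨hInt, ?_⟩
  calc ∫ ω, (∑ j, Y j ω)^2 ∂P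
      = ∑ j, ∑ j', ∫ ω, Y j ω * Y j' ω ∂P := by
        simp only [hexp]
        rw [integral_finset_sum _ fun j _ => integrable_finset_sum _ fun j' _ => hint j j']
        exact Finset.sum_congr rfl fun j _ => integral_finset_sum _ fun j' _ => hint j j'
    _ = ∑ j : Fin d, ∫ ω, Y j ω * Y j ω ∂P := by
        refine Finset.sum_congr rfl fun j _ => ?_
        rw [Finset.sum_eq_single j]
        · intro j' _ hj'; exact (hcross j j' (Ne.symm hj')).2
        · intro h; exact absurd (Finset.mem_univ j) h
    _ ≤ ∑ _j : Fin d, M := Finset.sum_le_sum fun j _ => (hdiag j).2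
    _ = d * M := by rw [Finset.sum_const, Finset.card_univ, Fintype.card_fin, nsmul_eq_mul]

lemma conc (P : Measure Ω) [IsProbabilityMeasure P] {d : ℕ}
    (Y : Fin d → Ω → ℝ) (X : Ω → ℝ) (hX : ∀ ω, X ω = ∑ j, Y j ω) {c M : ℝ}
    (hc : 0 < c)
    (hdiag : ∀ j, Integrable (fun ω => Y j ω * Y j ω) P ∧ ∫ ω, Y j ω * Y j ω ∂P ≤ M)
    (hcross : ∀ j j', j ≠ j' →
      Integrable (fun ω => Y j ω * Y j' ω) P ∧ ∫ ω, Y j ω * Y j' ω ∂P = 0) :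
    P {ω | c ≤ |X ω|} ≤ ENNReal.ofReal (d * M / c^2) := by
  obtain ⟨hInt, hIB⟩ := sum_sq_bound P Y M hdiag hcross
  have : ∀ ω, X ω ^ 2 = (∑ j, Y j ω)^2 := fun ω => by rw [hX]
  refine cheb P hc (by simpa only [this] using hInt) ?_
  simp only [this]
  exact hIB


set_option maxHeartbeats 1000000 in
lemma det_core {V d : ℕ} (e : Fin V → Fin d → ℝ) (w : Fin d → ℝ) (y i : Fin V)
    (hiy : i ≠ y) (σ2 : ℝ) (hσ : 0 < σ2) (β : ℝ) (hβ0 : 0 < β) (hβ1 : β < 1)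
    (hβ : β ≤ 3/4) (hd : 17 ≤ d)
    (hAy : |(∑ j, (e y j)^2) - d*σ2| ≤ σ2*d/2)
    (hAi : |(∑ j, (e i j)^2) - d*σ2| ≤ σ2*d/2)
    (hS : |∑ j, e y j * w j| ≤ σ2*d/16)
    (hB : |∑ j, e y j * e i j| ≤ σ2*d/16)
    (hC : |∑ j, e i j * w j| ≤ σ2*d/16) :
    tokenLoss e (noised β (e y) w) y < tokenLoss e (noised β (e y) w) i := by
  have hdR : (17:ℝ) ≤ (d:ℝ) := by exact_mod_cast hd
  have hdpos : (0:ℝ) < d := by linarith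
  set z := noised β (e y) w with hz
  set a := Real.sqrt (1 - β) with ha
  set b := Real.sqrt β with hb
  have ha1 : a ≤ 1 := Real.sqrt_le_one.mpr (by linarith)
  have ha2 : 1/2 ≤ a := by
    rw [ha, show (1:ℝ)/2 = Real.sqrt (1/4) by
      rw [show (1:ℝ)/4 = (1/2)^2 by norm_num, Real.sqrt_sq (by norm_num)]]
    exact Real.sqrt_le_sqrt (by linarith)
  have hb0 : 0 ≤ b := Real.sqrt_nonneg β
  have hb1 : b ≤ 1 := Real.sqrt_le_one.mpr (by linarith)
  -- notation
  set Ay := ∑ j, (e y j)^2 with hAydef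
  set Ai := ∑ j, (e i j)^2 with hAidef
  set Sv := ∑ j, e y j * w j with hSdef
  set Bv := ∑ j, e y j * e i j with hBdef
  set Cv := ∑ j, e i j * w j with hCdef
  -- inner products
  have hZ : ∀ k, (∑ j, z j * e k j) =
      a * (∑ j, e y j * e k j) + b * (∑ j, e k j * w j) := by
    intro k
    rw [Finset.mul_sum, Finset.mul_sum, ← Finset.sum_add_distrib]
    refine Finset.sum_congr rfl fun j _ => ?_
    simp only [hz, noised]
    ring
  -- squared distances
  have hQ : ∀ k, (∑ j, (z j - e k j)^2) =
      (∑ j, (z j)^2) - 2 * (∑ j, z j * e k j) + (∑ j, (e k j)^2) := by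
    intro k
    rw [Finset.mul_sum, ← Finset.sum_sub_distrib, ← Finset.sum_add_distrib]
    refine Finset.sum_congr rfl fun j _ => ?_
    ring
  -- softmax denominator
  have hT : 0 < ∑ k : Fin V, Real.exp (∑ j, z j * e k j) :=
    Finset.sum_pos (fun k _ => Real.exp_pos _) ⟨y, Finset.mem_univ y⟩
  -- log rewriting
  have hlog : ∀ k, Real.log (Real.exp (∑ j, z j * e k j) /
      ∑ k' : Fin V, Real.exp (∑ j, z j * e k' j)) =
      (∑ j, z j * e k j) - Real.log (∑ k' : Fin V, Real.exp (∑ j, z j * e k' j)) := by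
    intro k
    rw [Real.log_div (Real.exp_ne_zero _) (ne_of_gt hT), Real.log_exp]
  rw [tokenLoss, tokenLoss, hlog, hlog, hQ, hQ, hZ, hZ]
  have hyy : (∑ j, e y j * e y j) = Ay := by
    rw [hAydef]; exact Finset.sum_congr rfl fun j _ => (sq (e y j)).symm
  rw [hyy, ← hAydef, ← hAidef, ← hSdef, ← hBdef, ← hCdef]
  -- bounds
  have hAybd := abs_le.mp hAy
  have hAibd := abs_le.mp hAi
  have hSbd := abs_le.mp hS
  have hBbd := abs_le.mp hB
  have hCbd := abs_le.mp hC
  have hAy0 : 0 ≤ Ay := Finset.sum_nonneg fun j _ => sq_nonneg _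
  set D := (d:ℝ) with hD
  have ha0 : (0:ℝ) ≤ a := by linarith
  have hc16 : (0:ℝ) ≤ σ2*D/16 := by positivity
  have h1 : σ2*D/4 ≤ a*Ay := by
    have t1 := mul_le_mul_of_nonneg_right ha2 hAy0
    linarith [hAybd.1, t1]
  have h2 : -(σ2*D/16) ≤ b*Sv := by
    have t1 := mul_le_mul_of_nonneg_left hSbd.1 hb0
    have t2 := mul_le_mul_of_nonneg_right hb1 hc16
    linarith
  have h3 : a*Bv ≤ σ2*D/16 := by
    have t1 := mul_le_mul_of_nonneg_left hBbd.2 ha0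
    have t2 := mul_le_mul_of_nonneg_right ha1 hc16
    linarith
  have h4 : b*Cv ≤ σ2*D/16 := by
    have t1 := mul_le_mul_of_nonneg_left hCbd.2 hb0
    have t2 := mul_le_mul_of_nonneg_right hb1 hc16
    linarith
  have hinner : σ2*D/16 ≤ (a*Ay + b*Sv) - (a*Bv + b*Cv) := by linarith
  have hDinv : (0:ℝ) < D⁻¹ := by positivity
  have hinner2 : 0 ≤ ((a*Ay + b*Sv) - (a*Bv + b*Cv)) * D⁻¹ :=
    mul_nonneg (by linarith) hDinv.le
  have h6 : -σ2 ≤ (Ai - Ay) * D⁻¹ := by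
    have hstep : -σ2*D ≤ Ai - Ay := by linarith
    have := mul_le_mul_of_nonneg_right hstep hDinv.le
    have hcan : -σ2*D*D⁻¹ = -σ2 := by field_simp
    linarith [hcan ▸ this]
  have h7 : σ2*17 ≤ σ2*D := mul_le_mul_of_nonneg_left hdR hσ.le
  rw [← sub_pos]
  ring_nf
  ring_nf at hinner hinner2 h6 h7
  linarith [hinner, hinner2, h6, h7]

open ProbabilityTheory in
lemma conc_sq {I : Type} {F : I → Ω → ℝ} {P : Measure Ω} [IsProbabilityMeasure P]
    (hIndep : iIndepFun F P)
    {d : ℕ} (p : Fin d → I) (hpinj : Function.Injective p)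
    {σ2 : ℝ}
    (h2 : ∀ j, Integrable (fun ω => (F (p j) ω)^2) P)
    (h4 : ∀ j, Integrable (fun ω => (F (p j) ω)^4) P)
    (hm2 : ∀ j, ∫ ω, (F (p j) ω)^2 ∂P = σ2)
    (hm4 : ∀ j, ∫ ω, (F (p j) ω)^4 ∂P = 3*σ2^2)
    (X : Ω → ℝ) (hX : ∀ ω, X ω = ∑ j, ((F (p j) ω)^2 - σ2))
    {c : ℝ} (hc : 0 < c) :
    P {ω | c ≤ |X ω|} ≤ ENNReal.ofReal ((d : ℝ) * (2*σ2^2) / c^2) := by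
  have hm : Measurable (fun x : ℝ => x^2 - σ2) :=
    (measurable_id.pow_const 2).sub measurable_const
  refine conc P (fun j ω => (F (p j) ω)^2 - σ2) X hX hc ?_ ?_
  · intro j
    have hre : (fun ω => ((F (p j) ω)^2 - σ2) * ((F (p j) ω)^2 - σ2))
        = (fun ω => (F (p j) ω)^4 - 2*σ2*(F (p j) ω)^2 + σ2^2) := by
      funext ω; ring
    rw [hre]
    have hInt : Integrable (fun ω => (F (p j) ω)^4 - 2*σ2*(F (p j) ω)^2 + σ2^2) P :=
      ((h4 j).sub ((h2 j).const_mul (2*σ2))).add (integrable_const _)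
    refine ⟨hInt, ?_⟩
    have hIntA : Integrable (fun ω => (F (p j) ω)^4 - 2*σ2*(F (p j) ω)^2) P :=
      (h4 j).sub ((h2 j).const_mul (2*σ2))
    have e1 : ∫ ω, ((F (p j) ω)^4 - 2*σ2*(F (p j) ω)^2 + σ2^2) ∂P
        = (∫ ω, ((F (p j) ω)^4 - 2*σ2*(F (p j) ω)^2) ∂P) + ∫ _ω, σ2^2 ∂P :=
      integral_add hIntA (integrable_const _)
    have e2 : ∫ ω, ((F (p j) ω)^4 - 2*σ2*(F (p j) ω)^2) ∂P
        = (∫ ω, (F (p j) ω)^4 ∂P) - ∫ ω, 2*σ2*(F (p j) ω)^2 ∂P :=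
      integral_sub (h4 j) ((h2 j).const_mul (2*σ2))
    have e3 : ∫ ω, 2*σ2*(F (p j) ω)^2 ∂P = 2*σ2 * ∫ ω, (F (p j) ω)^2 ∂P :=
      integral_const_mul _ _
    rw [e1, e2, e3, hm4 j, hm2 j, integral_const]
    simp [measure_univ]
    nlinarith [sq_nonneg σ2]
  · intro j j' hjj'
    have hind : ProbabilityTheory.IndepFun
        (fun ω => (F (p j) ω)^2 - σ2) (fun ω => (F (p j') ω)^2 - σ2) P :=
      (hIndep.indepFun (fun h => hjj' (hpinj h))).comp hm hm
    have hintj : ∀ j, Integrable (fun ω => (F (p j) ω)^2 - σ2) P :=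
      fun j => (h2 j).sub (integrable_const _)
    refine ⟨hind.integrable_mul (hintj j) (hintj j'), ?_⟩
    have hmul : ∫ ω, (((F (p j) ω)^2 - σ2) * ((F (p j') ω)^2 - σ2)) ∂P
        = (∫ ω, ((F (p j) ω)^2 - σ2) ∂P) * ∫ ω, ((F (p j') ω)^2 - σ2) ∂P :=
      hind.integral_fun_mul_eq_mul_integral (hintj j).aestronglyMeasurable (hintj j').aestronglyMeasurable
    have hzero : ∀ j, ∫ ω, ((F (p j) ω)^2 - σ2) ∂P = 0 := by
      intro j
      rw [integral_sub (h2 j) (integrable_const _), hm2 j, integral_const]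
      simp [measure_univ]
    rw [hmul, hzero j, zero_mul]

open ProbabilityTheory in
lemma conc_prod {I : Type} {F : I → Ω → ℝ} {P : Measure Ω} [IsProbabilityMeasure P]
    (hIndep : iIndepFun F P)
    (hFm : ∀ i, Measurable (F i))
    {d : ℕ} (p q : Fin d → I) (hpinj : Function.Injective p)
    (hqinj : Function.Injective q) (hdist : ∀ j j', p j ≠ q j')
    {m2p m2q : ℝ}
    (h1p : ∀ j, Integrable (F (p j)) P) (h1q : ∀ j, Integrable (F (q j)) P)
    (h2p : ∀ j, Integrable (fun ω => (F (p j) ω)^2) P)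
    (h2q : ∀ j, Integrable (fun ω => (F (q j) ω)^2) P)
    (hm1p : ∀ j, ∫ ω, F (p j) ω ∂P = 0)
    (hm2p : ∀ j, ∫ ω, (F (p j) ω)^2 ∂P = m2p)
    (hm2q : ∀ j, ∫ ω, (F (q j) ω)^2 ∂P = m2q)
    (X : Ω → ℝ) (hX : ∀ ω, X ω = ∑ j, F (p j) ω * F (q j) ω)
    {c : ℝ} (hc : 0 < c) :
    P {ω | c ≤ |X ω|} ≤ ENNReal.ofReal ((d : ℝ) * (m2p*m2q) / c^2) := by
  refine conc P (fun j ω => F (p j) ω * F (q j) ω) X hX hc ?_ ?_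
  · intro j
    have hre : (fun ω => (F (p j) ω * F (q j) ω) * (F (p j) ω * F (q j) ω))
        = (fun ω => (F (p j) ω)^2 * (F (q j) ω)^2) := by
      funext ω; ring
    have huw : IndepFun (F (p j)) (F (q j)) P := hIndep.indepFun (hdist j j)
    have hsq : IndepFun (fun ω => (F (p j) ω)^2) (fun ω => (F (q j) ω)^2) P :=
      huw.comp (measurable_id.pow_const 2) (measurable_id.pow_const 2)
    rw [hre]
    refine ⟨hsq.integrable_mul (h2p j) (h2q j), ?_⟩
    have hmul : ∫ ω, ((F (p j) ω)^2 * (F (q j) ω)^2) ∂P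
        = (∫ ω, (F (p j) ω)^2 ∂P) * ∫ ω, (F (q j) ω)^2 ∂P :=
      hsq.integral_fun_mul_eq_mul_integral (h2p j).aestronglyMeasurable (h2q j).aestronglyMeasurable
    rw [hmul, hm2p j, hm2q j]
  · intro j j' hjj'
    have hind : IndepFun (fun ω => F (p j) ω * F (q j) ω)
        (fun ω => F (p j') ω * F (q j') ω) P :=
      hIndep.indepFun_mul_mul hFm (p j) (q j) (p j') (q j')
        (fun h => hjj' (hpinj h)) (hdist j j') (Ne.symm (hdist j' j))
        (fun h => hjj' (hqinj h))
    have hintj : ∀ j, Integrable (fun ω => F (p j) ω * F (q j) ω) P :=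
      fun j => (hIndep.indepFun (hdist j j)).integrable_mul (h1p j) (h1q j)
    refine ⟨hind.integrable_mul (hintj j) (hintj j'), ?_⟩
    have hmul : ∫ ω, ((F (p j) ω * F (q j) ω) * (F (p j') ω * F (q j') ω)) ∂P
        = (∫ ω, (F (p j) ω * F (q j) ω) ∂P) * ∫ ω, (F (p j') ω * F (q j') ω) ∂P :=
      hind.integral_fun_mul_eq_mul_integral (hintj j).aestronglyMeasurable (hintj j').aestronglyMeasurable
    have hone : ∫ ω, (F (p j) ω * F (q j) ω) ∂P
        = (∫ ω, F (p j) ω ∂P) * ∫ ω, F (q j) ω ∂P :=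
      (hIndep.indepFun (hdist j j)).integral_fun_mul_eq_mul_integral (h1p j).aestronglyMeasurable (h1q j).aestronglyMeasurable
    rw [hmul, hone, hm1p j, zero_mul, zero_mul]

end Aux

set_option maxHeartbeats 2000000 in
/-- **Lemma 2**: the degenerated (nearest-neighbor) model recovers the true token with
probability tending to `1` in the joint limit `β̄ → 0`, `d → ∞`: with probability greater
than `1 − δ`, for every token index `i ≠ y` we have `ℓ(z_t, y) < ℓ(z_t, i)`, so that `y` is
the unique minimizer of `i ↦ ℓ(z_t, i)` and the degenerated model's output equals `z₀`. -/
theorem degenerated_model_recovers_true_token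
    (σe : ℝ) (hσe : 0 < σe) (V : ℕ) (hV : 2 ≤ V) (y : Fin V)
    (δ : ℝ) (hδ : 0 < δ) :
    ∃ βb₀ : ℝ, 0 < βb₀ ∧ ∃ d₀ : ℕ,
      ∀ (βb : ℝ), 0 < βb → βb < βb₀ → βb < 1 →
      ∀ (d : ℕ), d₀ ≤ d →
      ∀ (Ω : Type) (_ : MeasurableSpace Ω) (P : Measure Ω), IsProbabilityMeasure P →
      ∀ (e : Fin V → Ω → Fin d → ℝ) (ε : Ω → Fin d → ℝ),
        (∀ k j, Measurable fun ω => e k ω j) →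
        (∀ j, Measurable fun ω => ε ω j) →
        (∀ k j, P.map (fun ω => e k ω j) = gaussianReal 0 (Real.toNNReal (σe ^ 2))) →
        (∀ j, P.map (fun ω => ε ω j) = gaussianReal 0 1) →
        iIndepFun
          (Sum.elim (fun (p : Fin V × Fin d) (ω : Ω) => e p.1 ω p.2)
            (fun (j : Fin d) (ω : Ω) => ε ω j)) P →
        ENNReal.ofReal (1 - δ) <
          P {ω | ∀ i : Fin V, i ≠ y →
              tokenLoss (fun k => e k ω) (noised βb (e y ω) (ε ω)) y <
                tokenLoss (fun k => e k ω) (noised βb (e y ω) (ε ω)) i} := by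
  have hδ'pos : 0 < min δ (1/2) := lt_min hδ (by norm_num)
  set δ' : ℝ := min δ (1/2) with hδ'def
  have hδ'le : δ' ≤ 1/2 := min_le_right _ _
  have hδ'δ : δ' ≤ δ := min_le_left _ _
  set σ2 : ℝ := σe^2 with hσ2def
  have hσ2 : 0 < σ2 := by positivity
  set C₀ : ℝ := 256*(1+1/σ2) with hC₀def
  have hC₀pos : 0 < C₀ := by positivity
  have hC256 : 256 ≤ C₀ := by
    have h : 0 < 1/σ2 := by positivity
    nlinarith
  have hCσ : 256 ≤ C₀*σ2 := by
    have h : C₀*σ2 = 256*σ2 + 256 := by rw [hC₀def]; field_simp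
    nlinarith
  have hVR : (2:ℝ) ≤ (V:ℝ) := by exact_mod_cast hV
  set K : ℝ := 4*(V:ℝ)*C₀ with hKdef
  have hKpos : 0 < K := by positivity
  refine ⟨3/4, by norm_num, max 17 (Nat.ceil (2*K/δ') + 1), ?_⟩
  intro βb hβ0 hβlt hβ1 d hd Ω mΩ P hP e ε he hε hmape hmapε hIndep
  have hd17 : 17 ≤ d := le_trans (le_max_left _ _) hd
  have hdR : (17:ℝ) ≤ (d:ℝ) := by exact_mod_cast hd17
  have hdpos : (0:ℝ) < d := by linarith
  have hdK : 2*K/δ' ≤ (d:ℝ) := by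
    have h1 : Nat.ceil (2*K/δ') + 1 ≤ d := le_trans (le_max_right _ _) hd
    calc 2*K/δ' ≤ (Nat.ceil (2*K/δ') : ℝ) := Nat.le_ceil _
    _ ≤ (d:ℝ) := by exact_mod_cast le_trans (Nat.le_succ _) h1
  have hKd : K/(d:ℝ) ≤ δ'/2 := by
    have h2K : 2*K ≤ (d:ℝ) * δ' := (div_le_iff₀ hδ'pos).mp hdK
    rw [div_le_div_iff₀ hdpos (by norm_num : (0:ℝ) < 2)]
    nlinarith
  set v : ℝ≥0 := Real.toNNReal (σe^2) with hvdef
  have hv : v ≠ 0 := by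
    rw [hvdef, ne_eq, Real.toNNReal_eq_zero, not_le]
    positivity
  have hvR : ((v:ℝ)) = σ2 := Real.coe_toNNReal _ (sq_nonneg σe)
  -- coordinate moments
  have intE : ∀ (k : Fin V) (j : Fin d) (n : ℕ), Integrable (fun ω => (e k ω j)^n) P :=
    fun k j n => map_integrable (he k j) hv (hmape k j) n
  have intW : ∀ (j : Fin d) (n : ℕ), Integrable (fun ω => (ε ω j)^n) P :=
    fun j n => map_integrable (hε j) one_ne_zero (hmapε j) n
  have intE1 : ∀ k j, Integrable (fun ω => e k ω j) P := fun k j => by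
    simpa using intE k j 1
  have intW1 : ∀ j, Integrable (fun ω => ε ω j) P := fun j => by simpa using intW j 1
  have mE1 : ∀ k j, ∫ ω, e k ω j ∂P = 0 := fun k j => by
    have h := map_moment (he k j) (hmape k j) 1
    simp only [pow_one] at h
    rw [h, integral_id_gaussianReal v hv]
  have mW1 : ∀ j, ∫ ω, ε ω j ∂P = 0 := fun j => by
    have h := map_moment (hε j) (hmapε j) 1
    simp only [pow_one] at h
    rw [h, integral_id_gaussianReal 1 one_ne_zero]
  have mE2 : ∀ k j, ∫ ω, (e k ω j)^2 ∂P = σ2 := fun k j => by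
    rw [map_moment (he k j) (hmape k j) 2, integral_sq_gaussianReal v hv, hvR]
  have mE4 : ∀ k j, ∫ ω, (e k ω j)^4 ∂P = 3*σ2^2 := fun k j => by
    rw [map_moment (he k j) (hmape k j) 4, integral_pow4_gaussianReal v hv, hvR]
  have mW2 : ∀ j, ∫ ω, (ε ω j)^2 ∂P = 1 := fun j => by
    rw [map_moment (hε j) (hmapε j) 2, integral_sq_gaussianReal 1 one_ne_zero]
    simp
  have hFm : ∀ i : (Fin V × Fin d) ⊕ (Fin d), Measurable
      ((Sum.elim (fun (p : Fin V × Fin d) (ω : Ω) => e p.1 ω p.2)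
        (fun (j : Fin d) (ω : Ω) => ε ω j)) i) := by
    rintro (⟨k,j⟩|j)
    · exact he k j
    · exact hε j
  -- bad events
  set SA : Fin V → Set Ω :=
    fun k => {ω | σ2*(d:ℝ)/2 ≤ |(∑ j, (e k ω j)^2) - (d:ℝ)*σ2|} with hSAdef
  set SS : Set Ω := {ω | σ2*(d:ℝ)/16 ≤ |∑ j, e y ω j * ε ω j|} with hSSdef
  set SB : Fin V → Set Ω :=
    fun i => {ω | σ2*(d:ℝ)/16 ≤ |∑ j, e y ω j * e i ω j|} with hSBdef
  set SC : Fin V → Set Ω :=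
    fun i => {ω | σ2*(d:ℝ)/16 ≤ |∑ j, e i ω j * ε ω j|} with hSCdef
  set Bad : Set Ω := ((⋃ k, SA k) ∪ SS ∪ (⋃ i, ⋃ (_ : i ≠ y), SB i))
      ∪ (⋃ i, ⋃ (_ : i ≠ y), SC i) with hBaddef
  have hcA : (0:ℝ) < σ2*(d:ℝ)/2 := by positivity
  have hc1 : (0:ℝ) < σ2*(d:ℝ)/16 := by positivity
  have hmSA : ∀ k, MeasurableSet (SA k) := fun k =>
    measurableSet_le measurable_const
      (((Finset.measurable_sum _ fun j _ => (he k j).pow_const 2).sub measurable_const).abs)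
  have hmSS : MeasurableSet SS := measurableSet_le measurable_const
    ((Finset.measurable_sum _ fun j _ => (he y j).mul (hε j)).abs)
  have hmSB : ∀ i, MeasurableSet (SB i) := fun i => measurableSet_le measurable_const
    ((Finset.measurable_sum _ fun j _ => (he y j).mul (he i j)).abs)
  have hmSC : ∀ i, MeasurableSet (SC i) := fun i => measurableSet_le measurable_const
    ((Finset.measurable_sum _ fun j _ => (he i j).mul (hε j)).abs)
  have hmBad : MeasurableSet Bad :=
    (((MeasurableSet.iUnion hmSA).union hmSS).union
      (MeasurableSet.iUnion fun i => MeasurableSet.iUnion fun _ => hmSB i)).union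
      (MeasurableSet.iUnion fun i => MeasurableSet.iUnion fun _ => hmSC i)
  -- individual bounds
  have hbA : ∀ k, P (SA k) ≤ ENNReal.ofReal (C₀/(d:ℝ)) := by
    intro k
    have h := conc_sq hIndep (fun j => Sum.inl (k, j))
      (fun j j' h => by simpa using h)
      (fun j => intE k j 2) (fun j => intE k j 4) (fun j => mE2 k j) (fun j => mE4 k j)
      (fun ω => (∑ j, (e k ω j)^2) - (d:ℝ)*σ2)
      (fun ω => by
        rw [Finset.sum_sub_distrib, Finset.sum_const, Finset.card_univ,
          Fintype.card_fin, nsmul_eq_mul]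
        rfl)
      hcA
    refine le_trans h (ENNReal.ofReal_le_ofReal ?_)
    rw [div_le_div_iff₀ (by positivity) hdpos]
    nlinarith [mul_nonneg (show (0:ℝ) ≤ C₀ - 8 by linarith) (sq_nonneg (σ2*(d:ℝ)))]
  have hbS : P SS ≤ ENNReal.ofReal (C₀/(d:ℝ)) := by
    have h := conc_prod hIndep hFm (fun j => Sum.inl (y, j)) (fun j => Sum.inr j)
      (fun j j' h => by simpa using h) (fun j j' h => by simpa using h)
      (fun j j' => by simp)
      (fun j => intE1 y j) (fun j => intW1 j) (fun j => intE y j 2) (fun j => intW j 2)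
      (fun j => mE1 y j) (fun j => mE2 y j) (fun j => mW2 j)
      (fun ω => ∑ j, e y ω j * ε ω j) (fun ω => rfl) hc1
    refine le_trans h (ENNReal.ofReal_le_ofReal ?_)
    rw [div_le_div_iff₀ (by positivity) hdpos]
    nlinarith [mul_nonneg (mul_nonneg (show (0:ℝ) ≤ C₀*σ2 - 256 by linarith) hσ2.le)
      (sq_nonneg (d:ℝ))]
  have hbB : ∀ i, i ≠ y → P (SB i) ≤ ENNReal.ofReal (C₀/(d:ℝ)) := by
    intro i hiy
    have h := conc_prod hIndep hFm (fun j => Sum.inl (y, j)) (fun j => Sum.inl (i, j))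
      (fun j j' h => by simpa using h) (fun j j' h => by simpa using h)
      (fun j j' => by simp [Ne.symm hiy])
      (fun j => intE1 y j) (fun j => intE1 i j) (fun j => intE y j 2) (fun j => intE i j 2)
      (fun j => mE1 y j) (fun j => mE2 y j) (fun j => mE2 i j)
      (fun ω => ∑ j, e y ω j * e i ω j) (fun ω => rfl) hc1
    refine le_trans h (ENNReal.ofReal_le_ofReal ?_)
    rw [div_le_div_iff₀ (by positivity) hdpos]
    nlinarith [mul_nonneg (show (0:ℝ) ≤ C₀ - 256 by linarith) (sq_nonneg (σ2*(d:ℝ)))]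
  have hbC : ∀ i, P (SC i) ≤ ENNReal.ofReal (C₀/(d:ℝ)) := by
    intro i
    have h := conc_prod hIndep hFm (fun j => Sum.inl (i, j)) (fun j => Sum.inr j)
      (fun j j' h => by simpa using h) (fun j j' h => by simpa using h)
      (fun j j' => by simp)
      (fun j => intE1 i j) (fun j => intW1 j) (fun j => intE i j 2) (fun j => intW j 2)
      (fun j => mE1 i j) (fun j => mE2 i j) (fun j => mW2 j)
      (fun ω => ∑ j, e i ω j * ε ω j) (fun ω => rfl) hc1
    refine le_trans h (ENNReal.ofReal_le_ofReal ?_)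
    rw [div_le_div_iff₀ (by positivity) hdpos]
    nlinarith [mul_nonneg (mul_nonneg (show (0:ℝ) ≤ C₀*σ2 - 256 by linarith) hσ2.le)
      (sq_nonneg (d:ℝ))]
  -- union bound
  set x : ℝ≥0∞ := ENNReal.ofReal (C₀/(d:ℝ)) with hxdef
  have hchunkA : P (⋃ k, SA k) ≤ (V:ℝ≥0∞) * x := by
    calc P (⋃ k, SA k) ≤ ∑' k, P (SA k) := measure_iUnion_le _
    _ = ∑ k, P (SA k) := tsum_fintype _
    _ ≤ ∑ _k : Fin V, x := Finset.sum_le_sum fun k _ => hbA k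
    _ = (V:ℝ≥0∞) * x := by
        rw [Finset.sum_const, Finset.card_univ, Fintype.card_fin, nsmul_eq_mul]
  have hchunkB : P (⋃ i, ⋃ (_ : i ≠ y), SB i) ≤ (V:ℝ≥0∞) * x := by
    calc P (⋃ i, ⋃ (_ : i ≠ y), SB i) ≤ ∑' i, P (⋃ (_ : i ≠ y), SB i) :=
        measure_iUnion_le _
    _ = ∑ i, P (⋃ (_ : i ≠ y), SB i) := tsum_fintype _
    _ ≤ ∑ _i : Fin V, x := by
        refine Finset.sum_le_sum fun i _ => ?_
        by_cases hi : i = y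
        · simp [hi]
        · have huni : (⋃ (_ : i ≠ y), SB i) = SB i := by ext ω; simp [hi]
          rw [huni]
          exact hbB i hi
    _ = (V:ℝ≥0∞) * x := by
        rw [Finset.sum_const, Finset.card_univ, Fintype.card_fin, nsmul_eq_mul]
  have hchunkC : P (⋃ i, ⋃ (_ : i ≠ y), SC i) ≤ (V:ℝ≥0∞) * x := by
    calc P (⋃ i, ⋃ (_ : i ≠ y), SC i) ≤ ∑' i, P (⋃ (_ : i ≠ y), SC i) :=
        measure_iUnion_le _
    _ = ∑ i, P (⋃ (_ : i ≠ y), SC i) := tsum_fintype _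
    _ ≤ ∑ _i : Fin V, x := by
        refine Finset.sum_le_sum fun i _ => ?_
        by_cases hi : i = y
        · simp [hi]
        · have huni : (⋃ (_ : i ≠ y), SC i) = SC i := by ext ω; simp [hi]
          rw [huni]
          exact hbC i
    _ = (V:ℝ≥0∞) * x := by
        rw [Finset.sum_const, Finset.card_univ, Fintype.card_fin, nsmul_eq_mul]
  have hVx : (V:ℝ≥0∞) * x = ENNReal.ofReal ((V:ℝ) * (C₀/(d:ℝ))) := by
    rw [ENNReal.ofReal_mul (by positivity), ENNReal.ofReal_natCast]
  have hPBad : P Bad ≤ ENNReal.ofReal (δ'/2) := by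
    have hsum : P Bad ≤ (V:ℝ≥0∞)*x + x + (V:ℝ≥0∞)*x + (V:ℝ≥0∞)*x := by
      refine le_trans (measure_union_le _ _) ?_
      refine add_le_add (le_trans (measure_union_le _ _) ?_) hchunkC
      refine add_le_add (le_trans (measure_union_le _ _) ?_) hchunkB
      exact add_le_add hchunkA hbS
    refine le_trans hsum ?_
    rw [hVx, hxdef, ← ENNReal.ofReal_add (by positivity) (by positivity),
      ← ENNReal.ofReal_add (by positivity) (by positivity),
      ← ENNReal.ofReal_add (by positivity) (by positivity)]
    refine ENNReal.ofReal_le_ofReal ?_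
    have hbound : (V:ℝ)*(C₀/(d:ℝ))*3 + C₀/(d:ℝ) ≤ K/(d:ℝ) := by
      have hKd' : K/(d:ℝ) = 4*(V:ℝ)*(C₀/(d:ℝ)) := by rw [hKdef]; ring
      rw [hKd']
      nlinarith [mul_nonneg (show (0:ℝ) ≤ (V:ℝ)-1 by linarith)
        (div_nonneg hC₀pos.le hdpos.le)]
    linarith [hKd, hbound]
  -- complement is inside the good event
  have hsub : Badᶜ ⊆ {ω | ∀ i : Fin V, i ≠ y →
      tokenLoss (fun k => e k ω) (noised βb (e y ω) (ε ω)) y <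
        tokenLoss (fun k => e k ω) (noised βb (e y ω) (ε ω)) i} := by
    intro ω hω
    rw [hBaddef] at hω
    simp only [Set.compl_union, Set.mem_inter_iff, Set.mem_compl_iff, Set.mem_iUnion,
      not_exists] at hω
    obtain ⟨⟨⟨hA, hS⟩, hB⟩, hC⟩ := hω
    intro i hiy
    have hA' : ∀ k, |(∑ j, (e k ω j)^2) - (d:ℝ)*σ2| ≤ σ2*(d:ℝ)/2 :=
      fun k => (not_le.mp (hA k)).le
    have hS' : |∑ j, e y ω j * ε ω j| ≤ σ2*(d:ℝ)/16 := (not_le.mp hS).le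
    have hB' : |∑ j, e y ω j * e i ω j| ≤ σ2*(d:ℝ)/16 := (not_le.mp (hB i hiy)).le
    have hC' : |∑ j, e i ω j * ε ω j| ≤ σ2*(d:ℝ)/16 := (not_le.mp (hC i hiy)).le
    exact det_core (fun k => e k ω) (ε ω) y i hiy σ2 hσ2 βb hβ0 hβ1
      (le_of_lt (by linarith : βb < 3/4)) hd17 (hA' y) (hA' i) hS' hB' hC'
  -- conclude
  calc ENNReal.ofReal (1-δ) ≤ ENNReal.ofReal (1-δ') :=
      ENNReal.ofReal_le_ofReal (by linarith)
  _ < ENNReal.ofReal (1-δ'/2) := by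
      rw [ENNReal.ofReal_lt_ofReal_iff (by linarith)]
      linarith
  _ = 1 - ENNReal.ofReal (δ'/2) := by
      rw [ENNReal.ofReal_sub _ (by linarith : (0:ℝ) ≤ δ'/2), ENNReal.ofReal_one]
  _ ≤ 1 - P Bad := tsub_le_tsub_left hPBad 1
  _ = P Badᶜ := (prob_compl_eq_one_sub hmBad).symm
  _ ≤ _ := measure_mono hsub
end

section
/- Under the Setup, for every token index i ≠ y, the quantity g = √(1−β̄)·(⟪z₀, e_i⟫/d) + √β̄·(⟪ε, e_i⟫/d) − √(1−β̄)·(⟪z₀, z₀⟫/d) − √β̄·(⟪ε, z₀⟫/d) converges in probability to −σ_e² in the joint limit β̄ → 0, d → ∞: for every η > 0 and δ > 0 there exist β̄₀ > 0 and d₀ ∈ ℕ such that for all β̄ ∈ (0, β̄₀) and all d ≥ d₀, the probability that |g + σ_e²| < η is greater than 1 − δ. (Limit of g(z₀, ε, e_i, z₀) in the proof of Lemma 1.) -/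
open MeasureTheory ProbabilityTheory Finset

/-- Euclidean inner product on `ℝ^d` (as functions `Fin d → ℝ`). -/
noncomputable def edot {d : ℕ} (u v : Fin d → ℝ) : ℝ := ∑ j, u j * v j

section Helpers
open MeasureTheory ProbabilityTheory Real Filter


lemma integrable_pow_mul_exp_neg_mul_sq' (k : ℕ) {b : ℝ} (hb : 0 < b) :
    Integrable (fun x : ℝ => x ^ k * Real.exp (-b * x ^ 2)) := by
  have h : (-1 : ℝ) < (k : ℝ) :=
    lt_of_lt_of_le (by norm_num) (Nat.cast_nonneg k)
  simpa [Real.rpow_natCast] using integrable_rpow_mul_exp_neg_mul_sq hb h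

lemma gauss_moment_rec (k : ℕ) {b : ℝ} (hb : 0 < b) :
    (2*b) * ∫ x : ℝ, x ^ (k+2) * Real.exp (-b * x ^ 2)
      = ((k:ℝ)+1) * ∫ x : ℝ, x ^ k * Real.exp (-b * x ^ 2) := by
  have hu : ∀ x : ℝ, HasDerivAt (fun x : ℝ => x ^ (k+1)) (((k:ℝ)+1) * x ^ k) x := by
    intro x
    simpa using hasDerivAt_pow (k+1) x
  have hv : ∀ x : ℝ, HasDerivAt (fun x : ℝ => Real.exp (-b * x^2))
      (Real.exp (-b * x^2) * (-b * (2 * x^1))) x := by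
    intro x
    exact (((hasDerivAt_pow 2 x).const_mul (-b)).exp).congr_deriv (by norm_num)
  have h1 : Integrable (fun x : ℝ => x ^ (k+1) * (Real.exp (-b * x^2) * (-b * (2 * x^1)))) := by
    refine (((integrable_pow_mul_exp_neg_mul_sq' (k+2) hb)).const_mul (-(2*b))).congr ?_
    exact ae_of_all _ fun x => by ring
  have h2 : Integrable (fun x : ℝ => ((k:ℝ)+1) * x ^ k * Real.exp (-b * x^2)) := by
    refine (((integrable_pow_mul_exp_neg_mul_sq' k hb)).const_mul ((k:ℝ)+1)).congr ?_
    exact ae_of_all _ fun x => by ring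
  have h3 : Integrable (fun x : ℝ => x ^ (k+1) * Real.exp (-b * x^2)) :=
    integrable_pow_mul_exp_neg_mul_sq' (k+1) hb
  have hibp := integral_mul_deriv_eq_deriv_mul_of_integrable
    (u := fun x : ℝ => x ^ (k+1)) (v := fun x : ℝ => Real.exp (-b * x^2))
    (u' := fun x : ℝ => ((k:ℝ)+1) * x ^ k)
    (v' := fun x : ℝ => Real.exp (-b * x^2) * (-b * (2 * x^1)))
    (fun x _ => hu x) (fun x _ => hv x) (by simpa [Pi.mul_def] using h1) (by simpa [Pi.mul_def] using h2)
    (by simpa [Pi.mul_def] using h3)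
  have e1 : ∫ x : ℝ, x ^ (k+1) * (Real.exp (-b * x^2) * (-b * (2 * x^1)))
      = (-(2*b)) * ∫ x : ℝ, x ^ (k+2) * Real.exp (-b * x ^ 2) := by
    rw [← integral_const_mul _ _]
    exact integral_congr_ae (ae_of_all _ fun x => by ring)
  have e2 : ∫ x : ℝ, ((k:ℝ)+1) * x ^ k * Real.exp (-b * x^2)
      = ((k:ℝ)+1) * ∫ x : ℝ, x ^ k * Real.exp (-b * x ^ 2) := by
    rw [← integral_const_mul _ _]
    exact integral_congr_ae (ae_of_all _ fun x => by ring)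
  rw [e1, e2] at hibp
  linarith

lemma gauss_moment_one {b : ℝ} : ∫ x : ℝ, x * Real.exp (-b * x ^ 2) = 0 := by
  have h := MeasureTheory.integral_neg_eq_self (fun x : ℝ => x * Real.exp (-b * x ^ 2))
    (volume : Measure ℝ)
  simp only [neg_sq, neg_mul] at h ⊢
  rw [integral_neg] at h
  linarith

section GaussMoments
open ENNReal NNReal

variable {v : ℝ≥0}

lemma gaussianReal_integral_eq (hv : v ≠ 0) (f : ℝ → ℝ) :
    ∫ x, f x ∂(gaussianReal 0 v) = ∫ x, gaussianPDFReal 0 v x * f x := by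
  rw [gaussianReal_of_var_ne_zero 0 hv]
  have : (gaussianPDF 0 v) = fun x => ((gaussianPDFReal 0 v x).toNNReal : ℝ≥0∞) := rfl
  rw [this, integral_withDensity_eq_integral_smul
    ((measurable_gaussianPDFReal 0 v).real_toNNReal) f]
  refine integral_congr_ae (ae_of_all _ fun x => ?_)
  simp [NNReal.smul_def, Real.coe_toNNReal _ (gaussianPDFReal_nonneg 0 v x)]

lemma gaussianReal_integrable_of (hv : v ≠ 0) (f : ℝ → ℝ)
    (hf : Integrable (fun x => gaussianPDFReal 0 v x * f x)) :
    Integrable f (gaussianReal 0 v) := by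
  rw [gaussianReal_of_var_ne_zero 0 hv]
  have h0 : (gaussianPDF 0 v) = fun x => ((gaussianPDFReal 0 v x).toNNReal : ℝ≥0∞) := rfl
  rw [h0, integrable_withDensity_iff_integrable_coe_smul
    ((measurable_gaussianPDFReal 0 v).real_toNNReal)]
  refine hf.congr (ae_of_all _ fun x => ?_)
  simp [smul_eq_mul, Real.coe_toNNReal _ (gaussianPDFReal_nonneg 0 v x)]

lemma gaussianPDFReal_zero_eq (x : ℝ) :
    gaussianPDFReal 0 v x
      = (Real.sqrt (2*π*v))⁻¹ * Real.exp (-(2*(v:ℝ))⁻¹ * x ^ 2) := by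
  unfold gaussianPDFReal
  rw [sub_zero]
  congr 1
  ring_nf

lemma gauss_pow_integral (hv : v ≠ 0) (k : ℕ) :
    ∫ x, x ^ k ∂(gaussianReal 0 v)
      = (Real.sqrt (2*π*v))⁻¹ * ∫ x : ℝ, x ^ k * Real.exp (-(2*(v:ℝ))⁻¹ * x ^ 2) := by
  rw [gaussianReal_integral_eq hv, ← integral_const_mul _ _]
  refine integral_congr_ae (ae_of_all _ fun x => ?_)
  simp only [gaussianPDFReal_zero_eq]
  ring

lemma gauss_norm (hv : v ≠ 0) :
    (Real.sqrt (2*π*v))⁻¹ * ∫ x : ℝ, Real.exp (-(2*(v:ℝ))⁻¹ * x ^ 2) = 1 := by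
  have h := integral_gaussianPDFReal_eq_one 0 hv
  rw [← h, ← integral_const_mul _ _]
  refine integral_congr_ae (ae_of_all _ fun x => ?_)
  simp only [gaussianPDFReal_zero_eq]

lemma gauss_integrable_pow (hv : v ≠ 0) (k : ℕ) :
    Integrable (fun x => x ^ k) (gaussianReal 0 v) := by
  have hvpos : (0:ℝ) < (v:ℝ) := by
    have := hv
    positivity
  have hb : (0:ℝ) < (2*(v:ℝ))⁻¹ := by positivity
  refine gaussianReal_integrable_of hv _ ?_
  refine ((integrable_pow_mul_exp_neg_mul_sq' k hb).const_mul
    ((Real.sqrt (2*π*v))⁻¹)).congr (ae_of_all _ fun x => ?_)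
  simp only [gaussianPDFReal_zero_eq]
  ring


lemma vpos (hv : v ≠ 0) : (0:ℝ) < (v:ℝ) := by
  have h : v ≠ 0 := hv
  positivity

lemma gauss_m1 (hv : v ≠ 0) : ∫ x, x ∂(gaussianReal 0 v) = 0 := by
  have h := gauss_pow_integral (hv := hv) 1
  simp only [pow_one] at h
  rw [h, gauss_moment_one, mul_zero]

lemma gauss_m2 (hv : v ≠ 0) : ∫ x, x ^ 2 ∂(gaussianReal 0 v) = v := by
  have hvpos := vpos hv
  have hb : (0:ℝ) < (2*(v:ℝ))⁻¹ := by positivity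
  have hrec := gauss_moment_rec 0 hb
  simp only [Nat.cast_zero, zero_add, pow_zero, one_mul] at hrec
  have h2b : 2 * (2*(v:ℝ))⁻¹ = (v:ℝ)⁻¹ := by
    field_simp
  rw [h2b] at hrec
  have hI2 : ∫ x : ℝ, x ^ 2 * Real.exp (-(2*(v:ℝ))⁻¹ * x ^ 2)
      = (v:ℝ) * ∫ x : ℝ, Real.exp (-(2*(v:ℝ))⁻¹ * x ^ 2) := by
    have := hrec
    field_simp at this ⊢
    linarith
  rw [gauss_pow_integral hv 2, hI2]
  have := gauss_norm hv
  nlinarith [this]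

lemma gauss_m4 (hv : v ≠ 0) : ∫ x, x ^ 4 ∂(gaussianReal 0 v) = 3 * (v:ℝ) ^ 2 := by
  have hvpos := vpos hv
  have hb : (0:ℝ) < (2*(v:ℝ))⁻¹ := by positivity
  have hrec := gauss_moment_rec 2 hb
  simp only [show (2:ℕ)+2=4 from rfl, Nat.cast_ofNat] at hrec
  have h2b : 2 * (2*(v:ℝ))⁻¹ = (v:ℝ)⁻¹ := by field_simp
  rw [h2b] at hrec
  have hI4 : ∫ x : ℝ, x ^ 4 * Real.exp (-(2*(v:ℝ))⁻¹ * x ^ 2)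
      = 3 * (v:ℝ) * ∫ x : ℝ, x ^ 2 * Real.exp (-(2*(v:ℝ))⁻¹ * x ^ 2) := by
    field_simp at hrec ⊢
    linarith
  have hm2 := gauss_m2 hv
  rw [gauss_pow_integral hv 2] at hm2
  rw [gauss_pow_integral hv 4, hI4]
  nlinarith [hm2]

end GaussMoments

section Transfer
open NNReal

variable {Ω : Type} [MeasurableSpace Ω] {P : Measure Ω} {v : ℝ≥0} {X : Ω → ℝ}

lemma map_integrable_pow (hX : Measurable X)
    (hmap : P.map X = gaussianReal 0 v) (hv : v ≠ 0) (k : ℕ) :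
    Integrable (fun ω => X ω ^ k) P := by
  have h := gauss_integrable_pow hv k
  rw [← hmap] at h
  exact (integrable_map_measure (measurable_id.pow_const k).aestronglyMeasurable
    hX.aemeasurable).mp h

lemma map_integral_pow (hX : Measurable X)
    (hmap : P.map X = gaussianReal 0 v) (k : ℕ) :
    ∫ ω, X ω ^ k ∂P = ∫ x, x ^ k ∂(gaussianReal 0 v) := by
  rw [← hmap]
  exact (integral_map (f := fun x : ℝ => x ^ k) hX.aemeasurable
    (measurable_id'.pow_const k).aestronglyMeasurable).symm

lemma map_EX (hX : Measurable X) (hmap : P.map X = gaussianReal 0 v) (hv : v ≠ 0) :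
    ∫ ω, X ω ∂P = 0 := by
  have h := map_integral_pow hX hmap 1
  simp only [pow_one] at h
  rw [h, gauss_m1 hv]

lemma map_EX2 (hX : Measurable X) (hmap : P.map X = gaussianReal 0 v) (hv : v ≠ 0) :
    ∫ ω, X ω ^ 2 ∂P = v := by
  rw [map_integral_pow hX hmap 2, gauss_m2 hv]

lemma map_EX4 (hX : Measurable X) (hmap : P.map X = gaussianReal 0 v) (hv : v ≠ 0) :
    ∫ ω, X ω ^ 4 ∂P = 3 * (v:ℝ) ^ 2 := by
  rw [map_integral_pow hX hmap 4, gauss_m4 hv]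

lemma map_memLp2 [IsProbabilityMeasure P] (hX : Measurable X)
    (hmap : P.map X = gaussianReal 0 v) (hv : v ≠ 0) :
    MemLp X 2 P :=
  (memLp_two_iff_integrable_sq hX.aestronglyMeasurable).mpr
    (map_integrable_pow hX hmap hv 2)

lemma map_sq_memLp2 [IsProbabilityMeasure P] (hX : Measurable X)
    (hmap : P.map X = gaussianReal 0 v) (hv : v ≠ 0) :
    MemLp (fun ω => X ω * X ω) 2 P := by
  refine (memLp_two_iff_integrable_sq ((hX.mul hX).aestronglyMeasurable)).mpr ?_
  refine (map_integrable_pow hX hmap hv 4).congr (ae_of_all _ fun ω => ?_)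
  simp only [Pi.mul_apply]; ring

end Transfer

section Cheb

lemma cheb_mean {Ω : Type} [MeasurableSpace Ω] (P : Measure Ω) [IsProbabilityMeasure P]
    {d : ℕ} (hd : 0 < d)
    (W : Fin d → Ω → ℝ) (hL2 : ∀ j, MemLp (W j) 2 P)
    (hpair : Set.Pairwise Set.univ fun j k => IndepFun (W j) (W k) P)
    (μ0 M t : ℝ) (hM : 0 ≤ M) (ht : 0 < t)
    (hmean : ∀ j, ∫ ω, W j ω ∂P = μ0) (hvar : ∀ j, variance (W j) P ≤ M) :
    P {ω | t ≤ |(∑ j, W j ω) / d - μ0|} ≤ ENNReal.ofReal (M / (d * t ^ 2)) := by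
  have hdR : (0:ℝ) < d := Nat.cast_pos.mpr hd
  have hS2 : MemLp (∑ j, W j) 2 P := memLp_finset_sum' _ (fun j _ => hL2 j)
  have hES : ∫ ω, (∑ j, W j) ω ∂P = d * μ0 := by
    simp only [Finset.sum_apply]
    rw [integral_finset_sum _ (fun j _ => (hL2 j).integrable one_le_two)]
    simp [hmean, Finset.card_univ, mul_comm]
  have hVarS : variance (∑ j, W j) P ≤ d * M := by
    rw [ProbabilityTheory.IndepFun.variance_sum (fun j _ => hL2 j)
      (by rw [Finset.coe_univ]; exact hpair)]
    calc ∑ j, variance (W j) P ≤ ∑ _j : Fin d, M := Finset.sum_le_sum fun j _ => hvar j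
    _ = d * M := by simp [Finset.card_univ, mul_comm]
  have hc : (0:ℝ) < d * t := by positivity
  have hcheb := ProbabilityTheory.meas_ge_le_variance_div_sq (μ := P) hS2 hc
  rw [hES] at hcheb
  have hsets : {ω | t ≤ |(∑ j, W j ω) / d - μ0|}
      = {ω | (d:ℝ) * t ≤ |(∑ j, W j) ω - (d:ℝ) * μ0|} := by
    ext ω
    simp only [Set.mem_setOf_eq, Finset.sum_apply]
    have : |(∑ j, W j ω) / d - μ0| = |(∑ j, W j ω) - d * μ0| / d := by
      rw [show (∑ j, W j ω) / d - μ0 = ((∑ j, W j ω) - d * μ0) / d by field_simp,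
        abs_div, abs_of_pos hdR]
    rw [this, le_div_iff₀ hdR, mul_comm t]
  rw [hsets]
  refine hcheb.trans (ENNReal.ofReal_le_ofReal ?_)
  rw [div_le_div_iff₀ (by positivity) (by positivity)]
  calc variance (∑ j, W j) P * (d * t ^ 2) ≤ (d * M) * (d * t ^ 2) := by
        apply mul_le_mul_of_nonneg_right hVarS (by positivity)
  _ = M * ((d:ℝ) * t) ^ 2 := by ring

end Cheb

section Terms
open NNReal

variable {Ω : Type} [MeasurableSpace Ω] {P : Measure Ω}

lemma prod_term_bound [IsProbabilityMeasure P]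
    {d : ℕ} (hd : 0 < d) (U X : Fin d → Ω → ℝ) {vU vX : ℝ≥0} (hvU : vU ≠ 0) (hvX : vX ≠ 0)
    (hUm : ∀ j, Measurable (U j)) (hXm : ∀ j, Measurable (X j))
    (hUmap : ∀ j, P.map (U j) = gaussianReal 0 vU)
    (hXmap : ∀ j, P.map (X j) = gaussianReal 0 vX)
    (hindepUX : ∀ j, IndepFun (U j) (X j) P)
    (hpair : Set.Pairwise Set.univ
      (fun j k => IndepFun (fun ω => U j ω * X j ω) (fun ω => U k ω * X k ω) P))
    (t : ℝ) (ht : 0 < t) :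
    P {ω | t ≤ |(∑ j, U j ω * X j ω) / d|}
      ≤ ENNReal.ofReal (((vU:ℝ) * (vX:ℝ)) / (d * t ^ 2)) := by
  set W : Fin d → Ω → ℝ := fun j ω => U j ω * X j ω with hW
  have hIsq : ∀ j, Integrable (fun ω => W j ω ^ 2) P := by
    intro j
    have hind : IndepFun (fun ω => U j ω ^ 2) (fun ω => X j ω ^ 2) P :=
      (hindepUX j).comp (measurable_id'.pow_const 2) (measurable_id'.pow_const 2)
    have := hind.integrable_mul (map_integrable_pow (hUm j) (hUmap j) hvU 2)
      (map_integrable_pow (hXm j) (hXmap j) hvX 2)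
    refine this.congr (ae_of_all _ fun ω => ?_)
    simp only [hW, Pi.mul_apply]; ring
  have hL2 : ∀ j, MemLp (W j) 2 P := fun j =>
    (memLp_two_iff_integrable_sq ((hUm j).mul (hXm j)).aestronglyMeasurable).mpr (hIsq j)
  have hmean : ∀ j, ∫ ω, W j ω ∂P = 0 := by
    intro j
    have h := (hindepUX j).integral_mul_eq_mul_integral
      ((map_memLp2 (hUm j) (hUmap j) hvU).integrable one_le_two).aestronglyMeasurable
      ((map_memLp2 (hXm j) (hXmap j) hvX).integrable one_le_two).aestronglyMeasurable
    rw [map_EX (hUm j) (hUmap j) hvU, zero_mul] at h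
    rw [← h]
    exact integral_congr_ae (ae_of_all _ fun ω => by simp only [hW, Pi.mul_apply])
  have hvar : ∀ j, variance (W j) P ≤ (vU:ℝ) * (vX:ℝ) := by
    intro j
    rw [variance_eq_sub (hL2 j)]
    have hEW2 : ∫ ω, W j ω ^ 2 ∂P = (vU:ℝ) * (vX:ℝ) := by
      have hind : IndepFun (fun ω => U j ω ^ 2) (fun ω => X j ω ^ 2) P :=
        (hindepUX j).comp (measurable_id'.pow_const 2) (measurable_id'.pow_const 2)
      have h := hind.integral_mul_eq_mul_integral
        (map_integrable_pow (hUm j) (hUmap j) hvU 2).aestronglyMeasurable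
        (map_integrable_pow (hXm j) (hXmap j) hvX 2).aestronglyMeasurable
      rw [map_EX2 (hUm j) (hUmap j) hvU, map_EX2 (hXm j) (hXmap j) hvX] at h
      rw [← h]
      refine integral_congr_ae (ae_of_all _ fun ω => ?_)
      simp only [hW, Pi.mul_apply]; ring
    have h1 : (fun ω => (W j ^ 2) ω) = fun ω => W j ω ^ 2 := rfl
    simp only [Pi.pow_apply]
    rw [hEW2, hmean j]
    norm_num
  have := cheb_mean P hd W hL2 hpair 0 ((vU:ℝ)*(vX:ℝ)) t (by positivity) ht hmean hvar
  simpa using this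

lemma sq_term_bound [IsProbabilityMeasure P]
    {d : ℕ} (hd : 0 < d) (X : Fin d → Ω → ℝ) {vX : ℝ≥0} (hvX : vX ≠ 0)
    (hXm : ∀ j, Measurable (X j))
    (hXmap : ∀ j, P.map (X j) = gaussianReal 0 vX)
    (hpair : Set.Pairwise Set.univ
      (fun j k => IndepFun (fun ω => X j ω * X j ω) (fun ω => X k ω * X k ω) P))
    (t : ℝ) (ht : 0 < t) :
    P {ω | t ≤ |(∑ j, X j ω * X j ω) / d - (vX:ℝ)|}
      ≤ ENNReal.ofReal ((2 * (vX:ℝ) ^ 2) / (d * t ^ 2)) := by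
  set W : Fin d → Ω → ℝ := fun j ω => X j ω * X j ω with hW
  have hL2 : ∀ j, MemLp (W j) 2 P := fun j => map_sq_memLp2 (hXm j) (hXmap j) hvX
  have hmean : ∀ j, ∫ ω, W j ω ∂P = (vX:ℝ) := by
    intro j
    have h := map_EX2 (hXm j) (hXmap j) hvX
    rw [← h]
    exact integral_congr_ae (ae_of_all _ fun ω => by simp only [hW]; ring)
  have hvar : ∀ j, variance (W j) P ≤ 2 * (vX:ℝ) ^ 2 := by
    intro j
    rw [variance_eq_sub (hL2 j)]
    have hEW2 : ∫ ω, W j ω ^ 2 ∂P = 3 * (vX:ℝ) ^ 2 := by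
      have h := map_EX4 (hXm j) (hXmap j) hvX
      rw [← h]
      exact integral_congr_ae (ae_of_all _ fun ω => by simp only [hW]; ring)
    simp only [Pi.pow_apply]
    rw [hEW2, hmean j]
    nlinarith [sq_nonneg (vX:ℝ)]
  have := cheb_mean P hd W hL2 hpair (vX:ℝ) (2*(vX:ℝ)^2) t (by positivity) ht hmean hvar
  simpa using this

end Terms

lemma deterministic_bound (σe βb η : ℝ) (hσ2 : 0 < σe ^ 2) (hη : 0 < η)
    (hβ0 : 0 < βb) (hβ1 : βb < 1) (hββ : βb ≤ η / (5 * (σe ^ 2 + 1)))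
    (A B C D : ℝ) (h1 : |A| < η / 5) (h2 : |B| < η / 5) (h3 : |C - σe ^ 2| < η / 5)
    (h4 : |D| < η / 5) :
    |(Real.sqrt (1 - βb) * A + Real.sqrt βb * B - Real.sqrt (1 - βb) * C
      - Real.sqrt βb * D) + σe ^ 2| < η := by
  set s1 : ℝ := Real.sqrt (1 - βb) with hs1_def
  set s2 : ℝ := Real.sqrt βb with hs2_def
  have hs1_0 : 0 ≤ s1 := Real.sqrt_nonneg _
  have hs1_1 : s1 ≤ 1 := Real.sqrt_le_one.mpr (by linarith)
  have hs2_0 : 0 ≤ s2 := Real.sqrt_nonneg _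
  have hs2_1 : s2 ≤ 1 := Real.sqrt_le_one.mpr (by linarith)
  have hs1sq : s1 ^ 2 = 1 - βb := Real.sq_sqrt (by linarith)
  have h1ms1 : 1 - s1 ≤ βb := by nlinarith
  have habs : ∀ (c x : ℝ), 0 ≤ c → c ≤ 1 → |x| < η / 5 → |c * x| < η / 5 := by
    intro c x hc0 hc1 hx
    calc |c * x| = c * |x| := by rw [abs_mul, abs_of_nonneg hc0]
    _ ≤ |x| := mul_le_of_le_one_left (abs_nonneg _) hc1
    _ < η / 5 := hx
  have hA' := abs_lt.mp (habs s1 A hs1_0 hs1_1 h1)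
  have hB' := abs_lt.mp (habs s2 B hs2_0 hs2_1 h2)
  have hC' := abs_lt.mp (habs s1 (C - σe ^ 2) hs1_0 hs1_1 h3)
  have hD' := abs_lt.mp (habs s2 D hs2_0 hs2_1 h4)
  have hβσ : (1 - s1) * σe ^ 2 ≤ η / 5 := by
    have h5 : βb * (σe ^ 2 + 1) ≤ η / 5 := by
      rw [le_div_iff₀ (by positivity)] at hββ
      nlinarith
    nlinarith
  have hβσ0 : 0 ≤ (1 - s1) * σe ^ 2 := by nlinarith
  have hexpr : s1 * A + s2 * B - s1 * C - s2 * D + σe ^ 2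
      = s1 * A + s2 * B - s1 * (C - σe ^ 2) - s2 * D + (1 - s1) * σe ^ 2 := by ring
  rw [abs_lt]
  constructor
  · rw [hexpr]
    linarith [hA'.1, hB'.1, hC'.2, hD'.2]
  · rw [hexpr]
    linarith [hA'.2, hB'.2, hC'.1, hD'.1]

end Helpers

set_option maxHeartbeats 1000000 in
/-- **Limit of `g(z₀, ε, e_i, z₀)`** in the proof of Lemma 1: for every token index `i ≠ y`,
the quantity
`g = √(1−β̄)·(⟪z₀, e_i⟫/d) + √β̄·(⟪ε, e_i⟫/d) − √(1−β̄)·(⟪z₀, z₀⟫/d) − √β̄·(⟪ε, z₀⟫/d)`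
(with `z₀ = e_y`) converges in probability to `−σ_e²` in the joint limit `β̄ → 0`, `d → ∞`. -/
theorem g_tendsto_neg_sq_in_probability
    (σe : ℝ) (hσe : 0 < σe) (V : ℕ) (hV : 2 ≤ V) (y i : Fin V) (hi : i ≠ y)
    (η δ : ℝ) (hη : 0 < η) (hδ : 0 < δ) :
    ∃ βb₀ : ℝ, 0 < βb₀ ∧ ∃ d₀ : ℕ,
      ∀ (βb : ℝ), 0 < βb → βb < βb₀ → βb < 1 →
      ∀ (d : ℕ), d₀ ≤ d →
      ∀ (Ω : Type) (_ : MeasurableSpace Ω) (P : Measure Ω), IsProbabilityMeasure P →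
      ∀ (e : Fin V → Ω → Fin d → ℝ) (ε : Ω → Fin d → ℝ),
        (∀ k j, Measurable fun ω => e k ω j) →
        (∀ j, Measurable fun ω => ε ω j) →
        (∀ k j, P.map (fun ω => e k ω j) = gaussianReal 0 (Real.toNNReal (σe ^ 2))) →
        (∀ j, P.map (fun ω => ε ω j) = gaussianReal 0 1) →
        iIndepFun
          (Sum.elim (fun (p : Fin V × Fin d) (ω : Ω) => e p.1 ω p.2)
            (fun (j : Fin d) (ω : Ω) => ε ω j)) P →
        ENNReal.ofReal (1 - δ) <
          P {ω | |(Real.sqrt (1 - βb) * (edot (e y ω) (e i ω) / d)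
              + Real.sqrt βb * (edot (ε ω) (e i ω) / d)
              - Real.sqrt (1 - βb) * (edot (e y ω) (e y ω) / d)
              - Real.sqrt βb * (edot (ε ω) (e y ω) / d)) + σe ^ 2| < η} := by
  classical
  have hσ2 : (0:ℝ) < σe ^ 2 := by positivity
  set vE : NNReal := Real.toNNReal (σe ^ 2) with hvE_def
  have hvE : vE ≠ 0 := by
    simp [hvE_def, Real.toNNReal_eq_zero, not_le, hσ2, hσe.ne']
  have hvE_coe : (vE : ℝ) = σe ^ 2 := Real.coe_toNNReal _ hσ2.le
  set M : ℝ := 2 * (σe ^ 2 + 1) ^ 2 with hM_def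
  have hMpos : 0 < M := by positivity
  set δ'' : ℝ := min δ 1 with hδ''_def
  have hδ''pos : 0 < δ'' := lt_min hδ one_pos
  have hδ''le1 : δ'' ≤ 1 := min_le_right _ _
  have hδ''leδ : δ'' ≤ δ := min_le_left _ _
  set t : ℝ := η / 5 with ht_def
  have htpos : 0 < t := by positivity
  refine ⟨min (η / (5 * (σe ^ 2 + 1))) 1, lt_min (by positivity) one_pos,
    ⌈(8 * M) / (δ'' * t ^ 2)⌉₊ + 1, ?_⟩
  intro βb hβ0 hββ hβ1 d hd0 Ω mΩ P hP e ε he_meas hε_meas he_map hε_map hIndep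
  have hd : 0 < d := Nat.lt_of_lt_of_le (Nat.succ_pos _) hd0
  have hdR : (0:ℝ) < d := Nat.cast_pos.mpr hd
  have hone : (1 : NNReal) ≠ 0 := one_ne_zero
  have hdlarge : 8 * M / (δ'' * t ^ 2) ≤ (d:ℝ) := by
    calc 8 * M / (δ'' * t ^ 2) ≤ (⌈(8 * M) / (δ'' * t ^ 2)⌉₊ : ℝ) := Nat.le_ceil _
    _ ≤ (d:ℝ) := by exact_mod_cast le_trans (Nat.le_succ _) hd0
  have hkey : M / (d * t ^ 2) ≤ δ'' / 8 := by
    rw [div_le_div_iff₀ (by positivity) (by norm_num)]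
    have h8 : 8 * M ≤ (d:ℝ) * (δ'' * t ^ 2) := (div_le_iff₀ (by positivity)).mp hdlarge
    nlinarith
  have hFmeas : ∀ a, Measurable ((Sum.elim (fun (p : Fin V × Fin d) (ω : Ω) => e p.1 ω p.2)
      (fun (j : Fin d) (ω : Ω) => ε ω j)) a) := by
    rintro (⟨k, j⟩ | j)
    · exact he_meas k j
    · exact hε_meas j
  -- the four bad events
  set SA : Set Ω := {ω | t ≤ |(∑ j, e y ω j * e i ω j) / (d:ℝ)|} with hSA_def
  set SB : Set Ω := {ω | t ≤ |(∑ j, ε ω j * e i ω j) / (d:ℝ)|} with hSB_def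
  set SC : Set Ω := {ω | t ≤ |(∑ j, e y ω j * e y ω j) / (d:ℝ) - (vE:ℝ)|} with hSC_def
  set SD : Set Ω := {ω | t ≤ |(∑ j, ε ω j * e y ω j) / (d:ℝ)|} with hSD_def
  -- bounds for each bad event
  have hPA : P SA ≤ ENNReal.ofReal (((vE:ℝ) * (vE:ℝ)) / (d * t ^ 2)) := by
    refine prod_term_bound hd (fun j ω => e y ω j) (fun j ω => e i ω j) hvE hvE
      (fun j => he_meas y j) (fun j => he_meas i j) (fun j => he_map y j) (fun j => he_map i j)
      (fun j => hIndep.indepFun (i := Sum.inl (y, j)) (j := Sum.inl (i, j))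
        (by simp [Ne.symm hi]))
      (fun j _ k _ hjk => hIndep.indepFun_mul_mul hFmeas
        (Sum.inl (y, j)) (Sum.inl (i, j)) (Sum.inl (y, k)) (Sum.inl (i, k))
        (by simp [hjk]) (by simp [Ne.symm hi]) (by simp [hi]) (by simp [hjk]))
      t htpos
  have hPB : P SB ≤ ENNReal.ofReal ((((1:NNReal):ℝ) * (vE:ℝ)) / (d * t ^ 2)) := by
    refine prod_term_bound hd (fun j ω => ε ω j) (fun j ω => e i ω j) hone hvE
      (fun j => hε_meas j) (fun j => he_meas i j) (fun j => hε_map j) (fun j => he_map i j)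
      (fun j => hIndep.indepFun (i := Sum.inr j) (j := Sum.inl (i, j)) (by simp))
      (fun j _ k _ hjk => hIndep.indepFun_mul_mul hFmeas
        (Sum.inr j) (Sum.inl (i, j)) (Sum.inr k) (Sum.inl (i, k))
        (by simp [hjk]) (by simp) (by simp) (by simp [hjk]))
      t htpos
  have hPC : P SC ≤ ENNReal.ofReal ((2 * (vE:ℝ) ^ 2) / (d * t ^ 2)) := by
    refine sq_term_bound hd (fun j ω => e y ω j) hvE
      (fun j => he_meas y j) (fun j => he_map y j)
      (fun j _ k _ hjk => hIndep.indepFun_mul_mul hFmeas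
        (Sum.inl (y, j)) (Sum.inl (y, j)) (Sum.inl (y, k)) (Sum.inl (y, k))
        (by simp [hjk]) (by simp [hjk]) (by simp [hjk]) (by simp [hjk]))
      t htpos
  have hPD : P SD ≤ ENNReal.ofReal ((((1:NNReal):ℝ) * (vE:ℝ)) / (d * t ^ 2)) := by
    refine prod_term_bound hd (fun j ω => ε ω j) (fun j ω => e y ω j) hone hvE
      (fun j => hε_meas j) (fun j => he_meas y j) (fun j => hε_map j) (fun j => he_map y j)
      (fun j => hIndep.indepFun (i := Sum.inr j) (j := Sum.inl (y, j)) (by simp))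
      (fun j _ k _ hjk => hIndep.indepFun_mul_mul hFmeas
        (Sum.inr j) (Sum.inl (y, j)) (Sum.inr k) (Sum.inl (y, k))
        (by simp [hjk]) (by simp) (by simp) (by simp [hjk]))
      t htpos
  -- each bad event has probability at most δ''/8
  have hto8 : ∀ c : ℝ, 0 ≤ c → c ≤ M →
      ENNReal.ofReal (c / (d * t ^ 2)) ≤ ENNReal.ofReal (δ'' / 8) := by
    intro c hc0 hcM
    refine ENNReal.ofReal_le_ofReal (le_trans ?_ hkey)
    gcongr
  have hPA8 : P SA ≤ ENNReal.ofReal (δ'' / 8) :=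
    hPA.trans (hto8 _ (by positivity) (by rw [hvE_coe]; nlinarith))
  have hPB8 : P SB ≤ ENNReal.ofReal (δ'' / 8) :=
    hPB.trans (hto8 _ (by positivity) (by rw [hvE_coe]; push_cast; nlinarith))
  have hPC8 : P SC ≤ ENNReal.ofReal (δ'' / 8) :=
    hPC.trans (hto8 _ (by positivity) (by rw [hvE_coe]; nlinarith))
  have hPD8 : P SD ≤ ENNReal.ofReal (δ'' / 8) :=
    hPD.trans (hto8 _ (by positivity) (by rw [hvE_coe]; push_cast; nlinarith))
  -- measurability of the bad events
  have hmsum : ∀ (u v : Ω → Fin d → ℝ), (∀ j, Measurable fun ω => u ω j) →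
      (∀ j, Measurable fun ω => v ω j) → Measurable fun ω => (∑ j, u ω j * v ω j) / (d:ℝ) := by
    intro u v hu hv
    exact (Finset.measurable_sum _ (fun j _ => (hu j).mul (hv j))).div_const _
  have hmSA : MeasurableSet SA :=
    measurableSet_le measurable_const
      ((hmsum (fun ω => e y ω) (fun ω => e i ω) (he_meas y) (he_meas i)).abs)
  have hmSB : MeasurableSet SB :=
    measurableSet_le measurable_const ((hmsum ε (fun ω => e i ω) hε_meas (he_meas i)).abs)
  have hmSC : MeasurableSet SC :=
    measurableSet_le measurable_const
      (((hmsum (fun ω => e y ω) (fun ω => e y ω) (he_meas y) (he_meas y)).sub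
        measurable_const).abs)
  have hmSD : MeasurableSet SD :=
    measurableSet_le measurable_const ((hmsum ε (fun ω => e y ω) hε_meas (he_meas y)).abs)
  -- union bound
  have hPbad : P (SA ∪ SB ∪ SC ∪ SD) ≤ ENNReal.ofReal (δ'' / 2) := by
    calc P (SA ∪ SB ∪ SC ∪ SD) ≤ P (SA ∪ SB ∪ SC) + P SD := measure_union_le _ _
    _ ≤ (P (SA ∪ SB) + P SC) + P SD := add_le_add_left (measure_union_le _ _) _
    _ ≤ ((P SA + P SB) + P SC) + P SD :=
        add_le_add_left (add_le_add_left (measure_union_le _ _) _) _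
    _ ≤ ((ENNReal.ofReal (δ'' / 8) + ENNReal.ofReal (δ'' / 8)) + ENNReal.ofReal (δ'' / 8))
        + ENNReal.ofReal (δ'' / 8) :=
        add_le_add (add_le_add (add_le_add hPA8 hPB8) hPC8) hPD8
    _ = ENNReal.ofReal (δ'' / 2) := by
        rw [← ENNReal.ofReal_add (by positivity) (by positivity),
          ← ENNReal.ofReal_add (by positivity) (by positivity),
          ← ENNReal.ofReal_add (by positivity) (by positivity)]
        congr 1
        ring
  -- deterministic estimate on the complement
  have hsubset : (SA ∪ SB ∪ SC ∪ SD)ᶜ ⊆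
      {ω | |(Real.sqrt (1 - βb) * (edot (e y ω) (e i ω) / d)
          + Real.sqrt βb * (edot (ε ω) (e i ω) / d)
          - Real.sqrt (1 - βb) * (edot (e y ω) (e y ω) / d)
          - Real.sqrt βb * (edot (ε ω) (e y ω) / d)) + σe ^ 2| < η} := by
    intro ω hω
    simp only [Set.mem_compl_iff, Set.mem_union, hSA_def, hSB_def, hSC_def, hSD_def,
      Set.mem_setOf_eq, not_or, not_le] at hω
    obtain ⟨⟨⟨h1, h2⟩, h3⟩, h4⟩ := hω
    rw [hvE_coe] at h3
    simp only [Set.mem_setOf_eq, edot]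
    exact deterministic_bound σe βb η hσ2 hη hβ0 hβ1
      (le_of_lt (lt_of_lt_of_le hββ (min_le_left _ _))) _ _ _ _ h1 h2 h3 h4
  -- conclude
  have hPgood : ENNReal.ofReal (1 - δ'' / 2) ≤
      P {ω | |(Real.sqrt (1 - βb) * (edot (e y ω) (e i ω) / d)
          + Real.sqrt βb * (edot (ε ω) (e i ω) / d)
          - Real.sqrt (1 - βb) * (edot (e y ω) (e y ω) / d)
          - Real.sqrt βb * (edot (ε ω) (e y ω) / d)) + σe ^ 2| < η} := by
    refine le_trans ?_ (measure_mono hsubset)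
    have hcompl : P (SA ∪ SB ∪ SC ∪ SD)ᶜ = 1 - P (SA ∪ SB ∪ SC ∪ SD) :=
      prob_compl_eq_one_sub (((hmSA.union hmSB).union hmSC).union hmSD)
    rw [hcompl]
    calc ENNReal.ofReal (1 - δ'' / 2) = 1 - ENNReal.ofReal (δ'' / 2) := by
          rw [ENNReal.ofReal_sub _ (by positivity), ENNReal.ofReal_one]
    _ ≤ 1 - P (SA ∪ SB ∪ SC ∪ SD) := tsub_le_tsub_left hPbad _
  refine lt_of_lt_of_le ?_ hPgood
  have hlt : (1 - δ : ℝ) < 1 - δ'' / 2 := by linarith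
  calc ENNReal.ofReal (1 - δ) < ENNReal.ofReal (1 - δ'' / 2) :=
        (ENNReal.ofReal_lt_ofReal_iff (by linarith)).mpr hlt
  _ = ENNReal.ofReal (1 - δ'' / 2) := rfl
end

section
/- Self cross-entropy of a Gaussian embedding vanishes in probability as the dimension grows: fix σ_e > 0, V ≥ 2 and y ∈ {1,…,V}; for each d ∈ ℕ let e₁,…,e_V be independent random vectors in ℝ^d with i.i.d. N(0, σ_e²) coordinates. Then log( 1 + Σ_{i ≠ y} exp( ⟪e_y, e_i⟫ − ⟪e_y, e_y⟫ ) ) converges in probability to 0 as d → ∞; equivalently, −log of the softmax probability assigned to token y at its own embedding, with logits ⟪e_y, e_j⟫, tends to 0 in probability. -/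
open MeasureTheory ProbabilityTheory Finset

open Real
open scoped NNReal ENNReal


lemma myIntegrablePow {b : ℝ} (hb : 0 < b) (n : ℕ) :
    Integrable (fun x : ℝ => x ^ n * Real.exp (-b * x ^ 2)) := by
  have h := integrable_rpow_mul_exp_neg_mul_sq hb
    (s := (n : ℝ)) (lt_of_lt_of_le neg_one_lt_zero (Nat.cast_nonneg n))
  simpa [Real.rpow_natCast] using h

lemma myIntegrableGauss {v : ℝ≥0} (hv : v ≠ 0) (n : ℕ) :
    Integrable (fun x : ℝ => x ^ n) (gaussianReal 0 v) := by
  rw [gaussianReal_of_var_ne_zero _ hv]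
  rw [integrable_withDensity_iff (measurable_gaussianPDF _ _)
    (Filter.Eventually.of_forall fun x => ENNReal.ofReal_lt_top)]
  have hv0 : (0:ℝ) < (v:ℝ) := by positivity
  have hb : (0:ℝ) < (2*(v:ℝ))⁻¹ := by positivity
  have := (myIntegrablePow hb n).const_mul ((Real.sqrt (2 * π * v))⁻¹)
  apply this.congr
  refine Filter.Eventually.of_forall fun x => ?_
  simp only [gaussianPDF, gaussianPDFReal, ENNReal.toReal_ofReal
    (by positivity : (0:ℝ) ≤ (Real.sqrt (2 * π * v))⁻¹ * Real.exp (-(x-0)^2/(2*v)))]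
  rw [sub_zero]
  ring_nf
noncomputable def gmom (v : ℝ≥0) (n : ℕ) : ℝ := ∫ x, x ^ n ∂(gaussianReal 0 v)

lemma gmom_one {v : ℝ≥0} (hv : v ≠ 0) : gmom v 1 = 0 := by
  have hmap : (gaussianReal 0 v).map (fun x => (-1 : ℝ) * x) = gaussianReal 0 v := by
    have := gaussianReal_map_const_mul (μ := 0) (v := v) (-1)
    simpa using this
  have h1 : ∫ x, x ∂(gaussianReal 0 v) = ∫ x, (-1 : ℝ) * x ∂(gaussianReal 0 v) := by
    conv_lhs => rw [← hmap]
    rw [integral_map (μ := gaussianReal 0 v) (φ := fun x : ℝ => (-1:ℝ) * x)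
      (by fun_prop) measurable_id'.aestronglyMeasurable]
  have h2 : ∫ x, (-1:ℝ) * x ∂(gaussianReal 0 v) = - ∫ x, x ∂(gaussianReal 0 v) := by
    simp only [neg_one_mul]
    exact integral_neg _
  have : ∫ x, x ∂(gaussianReal 0 v) = 0 := by linarith
  simpa [gmom] using this

lemma gmom_even_nonneg (v : ℝ≥0) (n : ℕ) : 0 ≤ gmom v (2 * n) := by
  apply integral_nonneg
  intro x
  show (0:ℝ) ≤ x ^ (2 * n)
  rw [pow_mul]
  positivity

lemma gmom_two_pos {v : ℝ≥0} (hv : v ≠ 0) : 0 < gmom v 2 := by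
  set ν := gaussianReal 0 v with hν
  have hint : Integrable (fun x : ℝ => x ^ 2) ν := myIntegrableGauss hv 2
  have hpos : 0 < ν (Set.Ici 1) := by
    rw [hν, gaussianReal_apply 0 hv _]
    rw [lintegral_pos_iff_support (measurable_gaussianPDF 0 v)]
    have hsupp : Function.support (gaussianPDF 0 v) = Set.univ := by
      ext x
      simp [Function.support, gaussianPDF, ENNReal.ofReal_eq_zero, not_le,
        gaussianPDFReal_pos 0 v x hv]
    rw [hsupp, Measure.restrict_apply_univ, Real.volume_Ici]
    simp
  have h1 : (ν (Set.Ici 1)).toReal ≤ ∫ x in Set.Ici 1, x ^ 2 ∂ν := by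
    have : (ν (Set.Ici 1)).toReal = ∫ _x in Set.Ici 1, (1:ℝ) ∂ν := by
      rw [setIntegral_const]; simp; rfl
    rw [this]
    apply setIntegral_mono_on
    · exact integrableOn_const (measure_ne_top ν _)
    · exact hint.integrableOn
    · exact measurableSet_Ici
    · intro x hx
      have : (1:ℝ) ≤ x := hx
      nlinarith
  have h2 : ∫ x in Set.Ici 1, x ^ 2 ∂ν ≤ ∫ x, x ^ 2 ∂ν :=
    setIntegral_le_integral hint (Filter.Eventually.of_forall fun x => sq_nonneg x)
  have h3 : 0 < (ν (Set.Ici 1)).toReal :=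
    ENNReal.toReal_pos hpos.ne' (measure_ne_top ν _)
  have : 0 < ∫ x, x ^ 2 ∂ν := lt_of_lt_of_le h3 (le_trans h1 h2)
  simpa [gmom] using this
lemma law_pow {Ω : Type*} [MeasurableSpace Ω] {P : Measure Ω} {v : ℝ≥0} (hv : v ≠ 0)
    {X : Ω → ℝ} (hX : Measurable X) (hl : P.map X = gaussianReal 0 v) (n : ℕ) :
    Integrable (fun ω => X ω ^ n) P ∧ ∫ ω, X ω ^ n ∂P = gmom v n := by
  have h1 : Integrable (fun x : ℝ => x ^ n) (P.map X) := by
    rw [hl]; exact myIntegrableGauss hv n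
  constructor
  · have := (integrable_map_measure (by fun_prop) hX.aemeasurable).mp h1
    exact this
  · rw [gmom, ← hl, integral_map hX.aemeasurable (by fun_prop)]

lemma pair_stats {Ω : Type*} [MeasurableSpace Ω] {P : Measure Ω} [IsProbabilityMeasure P]
    {v : ℝ≥0} (hv : v ≠ 0) {A B : Ω → ℝ} (hA : Measurable A) (hB : Measurable B)
    (hlA : P.map A = gaussianReal 0 v) (hlB : P.map B = gaussianReal 0 v)
    (hAB : IndepFun A B P) :
    MemLp (fun ω => A ω * B ω - A ω * A ω) 2 P ∧
    (∫ ω, (A ω * B ω - A ω * A ω) ∂P) = -(gmom v 2) ∧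
    variance (fun ω => A ω * B ω - A ω * A ω) P = gmom v 4 := by
  obtain ⟨hA1, hA1v⟩ := law_pow hv hA hlA 1
  obtain ⟨hA2, hA2v⟩ := law_pow hv hA hlA 2
  obtain ⟨hA3, hA3v⟩ := law_pow hv hA hlA 3
  obtain ⟨hA4, hA4v⟩ := law_pow hv hA hlA 4
  obtain ⟨hB1, hB1v⟩ := law_pow hv hB hlB 1
  obtain ⟨hB2, hB2v⟩ := law_pow hv hB hlB 2
  simp only [pow_one] at hA1 hA1v hB1 hB1v
  have hM1 : gmom v 1 = 0 := gmom_one hv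
  -- independence of powers
  have hA2B2 : IndepFun (fun ω => A ω ^ 2) (fun ω => B ω ^ 2) P :=
    hAB.comp (measurable_id.pow_const 2) (measurable_id.pow_const 2)
  have hA3B : IndepFun (fun ω => A ω ^ 3) B P :=
    hAB.comp (measurable_id.pow_const 3) measurable_id
  -- integrability of products
  have hABint : Integrable (fun ω => A ω * B ω) P := hAB.integrable_mul hA1 hB1
  have hA2B2int : Integrable (fun ω => A ω ^ 2 * B ω ^ 2) P := hA2B2.integrable_mul hA2 hB2
  have hA3Bint : Integrable (fun ω => A ω ^ 3 * B ω) P := hA3B.integrable_mul hA3 hB1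
  -- mean
  have hABval : ∫ ω, A ω * B ω ∂P = 0 := by
    have h0 : ∫ ω, A ω * B ω ∂P = (∫ ω, A ω ∂P) * ∫ ω, B ω ∂P :=
      hAB.integral_mul_eq_mul_integral hA1.1 hB1.1
    rw [h0, hA1v, hB1v, hM1, mul_zero]
  have hAAint : Integrable (fun ω => A ω * A ω) P := by
    have := hA2; simpa [sq] using this
  have hmean : (∫ ω, (A ω * B ω - A ω * A ω) ∂P) = -(gmom v 2) := by
    rw [integral_sub hABint hAAint, hABval]
    have : ∫ ω, A ω * A ω ∂P = gmom v 2 := by rw [← hA2v]; congr 1; ext ω; ring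
    rw [this]; ring
  -- second moment
  have hsq : ∀ ω, (A ω * B ω - A ω * A ω) ^ 2
      = A ω ^ 2 * B ω ^ 2 - 2 * (A ω ^ 3 * B ω) + A ω ^ 4 := by intro ω; ring
  have hZ2int : Integrable (fun ω => (A ω * B ω - A ω * A ω) ^ 2) P := by
    have : Integrable (fun ω => A ω ^ 2 * B ω ^ 2 - 2 * (A ω ^ 3 * B ω) + A ω ^ 4) P :=
      ((hA2B2int.sub (hA3Bint.const_mul 2)).add hA4)
    exact this.congr (Filter.Eventually.of_forall fun ω => (hsq ω).symm)
  have hZ2val : ∫ ω, (A ω * B ω - A ω * A ω) ^ 2 ∂P = gmom v 2 ^ 2 + gmom v 4 := by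
    calc ∫ ω, (A ω * B ω - A ω * A ω) ^ 2 ∂P
        = ∫ ω, (A ω ^ 2 * B ω ^ 2 - 2 * (A ω ^ 3 * B ω) + A ω ^ 4) ∂P := by
          apply integral_congr_ae; exact Filter.Eventually.of_forall fun ω => hsq ω
      _ = ∫ ω, A ω ^ 2 * B ω ^ 2 ∂P - 2 * ∫ ω, A ω ^ 3 * B ω ∂P + ∫ ω, A ω ^ 4 ∂P := by
          have hfg : Integrable (fun ω => A ω ^ 2 * B ω ^ 2 - 2 * (A ω ^ 3 * B ω)) P :=
            hA2B2int.sub (hA3Bint.const_mul 2)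
          rw [integral_add hfg hA4, integral_sub hA2B2int (hA3Bint.const_mul 2),
            integral_const_mul]
      _ = gmom v 2 ^ 2 + gmom v 4 := by
          have e1 : ∫ ω, A ω ^ 2 * B ω ^ 2 ∂P = gmom v 2 * gmom v 2 := by
            have h0 : ∫ ω, A ω ^ 2 * B ω ^ 2 ∂P
                = (∫ ω, A ω ^ 2 ∂P) * ∫ ω, B ω ^ 2 ∂P :=
              hA2B2.integral_mul_eq_mul_integral hA2.1 hB2.1
            rw [h0, hA2v, hB2v]
          have e2 : ∫ ω, A ω ^ 3 * B ω ∂P = 0 := by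
            have h0 : ∫ ω, A ω ^ 3 * B ω ∂P = (∫ ω, A ω ^ 3 ∂P) * ∫ ω, B ω ∂P :=
              hA3B.integral_mul_eq_mul_integral hA3.1 hB1.1
            rw [h0, hA3v, hB1v, hM1, mul_zero]
          rw [e1, e2, hA4v]; ring
  -- Memℒp
  have hZm : AEStronglyMeasurable (fun ω => A ω * B ω - A ω * A ω) P :=
    (((hA.mul hB).sub (hA.mul hA)).aestronglyMeasurable)
  have hZ2 : MemLp (fun ω => A ω * B ω - A ω * A ω) 2 P := by
    rw [memLp_two_iff_integrable_sq hZm]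
    exact hZ2int
  refine ⟨hZ2, hmean, ?_⟩
  rw [variance_eq_sub hZ2]
  simp only [Pi.pow_apply]
  rw [hZ2val, hmean]
  ring
lemma sum_tail {Ω : Type*} [MeasurableSpace Ω] {P : Measure Ω} [IsProbabilityMeasure P]
    {v : ℝ≥0} (hv : v ≠ 0) {d : ℕ} {A B : Fin d → Ω → ℝ}
    (hA : ∀ j, Measurable (A j)) (hB : ∀ j, Measurable (B j))
    (hlA : ∀ j, P.map (A j) = gaussianReal 0 v) (hlB : ∀ j, P.map (B j) = gaussianReal 0 v)
    (hAB : ∀ j, IndepFun (A j) (B j) P)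
    (hpair : ∀ j k : Fin d, j ≠ k → IndepFun (fun ω => A j ω * B j ω - A j ω * A j ω)
                                     (fun ω => A k ω * B k ω - A k ω * A k ω) P)
    (t : ℝ) (hc : 0 < t + d * gmom v 2) :
    P {ω | t < ∑ j, (A j ω * B j ω - A j ω * A j ω)}
      ≤ ENNReal.ofReal (d * gmom v 4 / (t + d * gmom v 2) ^ 2) := by
  classical
  set Z : Fin d → Ω → ℝ := fun j ω => A j ω * B j ω - A j ω * A j ω with hZ
  have hstats : ∀ j, MemLp (Z j) 2 P ∧ (∫ ω, Z j ω ∂P) = -(gmom v 2) ∧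
      variance (Z j) P = gmom v 4 :=
    fun j => pair_stats hv (hA j) (hB j) (hlA j) (hlB j) (hAB j)
  set W : Ω → ℝ := ∑ j, Z j with hW
  have hWapp : ∀ ω, W ω = ∑ j, Z j ω := fun ω => by
    rw [hW]; simp [Finset.sum_apply]
  have hW2 : MemLp W 2 P := memLp_finsetSum' _ (fun j _ => (hstats j).1)
  have hint : ∀ j, Integrable (Z j) P := fun j => ((hstats j).1).integrable one_le_two
  have hEW : ∫ ω, W ω ∂P = -(d * gmom v 2) := by
    have : ∫ ω, W ω ∂P = ∑ j, ∫ ω, Z j ω ∂P := by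
      rw [show (fun ω => W ω) = fun ω => ∑ j, Z j ω from funext hWapp]
      exact integral_finset_sum _ (fun j _ => hint j)
    rw [this]
    simp only [(fun j => (hstats j).2.1)]
    simp [Finset.sum_const, card_univ]
  have hVar : variance W P = d * gmom v 4 := by
    rw [hW, IndepFun.variance_sum (fun j _ => (hstats j).1)
      (fun j _ k _ hjk => hpair j k hjk)]
    simp only [(fun j => (hstats j).2.2)]
    simp [Finset.sum_const, card_univ]
  have cheb := meas_ge_le_variance_div_sq (μ := P) hW2 hc
  have hsub : {ω | t < ∑ j, Z j ω} ⊆ {ω | t + d * gmom v 2 ≤ |W ω - P[W]|} := by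
    intro ω hω
    simp only [Set.mem_setOf_eq] at hω ⊢
    have hEW' : P[W] = -(d * gmom v 2) := hEW
    rw [hEW', hWapp ω]
    have : t + d * gmom v 2 < ∑ j, Z j ω + d * gmom v 2 := by linarith
    calc t + d * gmom v 2 ≤ ∑ j, Z j ω + d * gmom v 2 := this.le
      _ ≤ |∑ j, Z j ω + d * gmom v 2| := le_abs_self _
      _ = |∑ j, Z j ω - -(d * gmom v 2)| := by rw [sub_neg_eq_add]
  calc P {ω | t < ∑ j, Z j ω} ≤ P {ω | t + d * gmom v 2 ≤ |W ω - P[W]|} := measure_mono hsub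
    _ ≤ ENNReal.ofReal (variance W P / (t + d * gmom v 2) ^ 2) := cheb
    _ = ENNReal.ofReal (d * gmom v 4 / (t + d * gmom v 2) ^ 2) := by rw [hVar]

/-- **Self cross-entropy of a Gaussian embedding vanishes in probability** as the dimension
grows: with, for each `d`, embeddings `e₁,…,e_V` in `ℝ^d` that are independent with i.i.d.
`N(0, σ_e²)` coordinates, the quantity
`log(1 + Σ_{i ≠ y} exp(⟪e_y, e_i⟫ − ⟪e_y, e_y⟫))` — i.e. minus the log of the softmax
probability assigned to token `y` at its own embedding with logits `⟪e_y, e_j⟫` —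
converges in probability to `0` as `d → ∞`. -/
theorem self_cross_entropy_tendsto_zero_in_probability
    (σe : ℝ) (hσe : 0 < σe) (V : ℕ) (hV : 2 ≤ V) (y : Fin V)
    (Ω : ℕ → Type) (mΩ : ∀ d, MeasurableSpace (Ω d)) (P : ∀ d, Measure (Ω d))
    (hP : ∀ d, IsProbabilityMeasure (P d))
    (e : ∀ d : ℕ, Fin V → Ω d → Fin d → ℝ)
    (he_meas : ∀ d k j, Measurable fun ω => e d k ω j)
    (he_law : ∀ d k j, (P d).map (fun ω => e d k ω j) = gaussianReal 0 (Real.toNNReal (σe ^ 2)))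
    (he_indep : ∀ d, iIndepFun (m := fun _ => Real.measurableSpace)
      (fun (p : Fin V × Fin d) (ω : Ω d) => e d p.1 ω p.2) (P d)) :
    ∀ η : ℝ, 0 < η →
      Filter.Tendsto
        (fun d : ℕ =>
          P d {ω | η < |Real.log (1 + ∑ i ∈ Finset.univ.erase y,
              Real.exp (edot (e d y ω) (e d i ω) - edot (e d y ω) (e d y ω)))|})
        Filter.atTop (nhds 0) := by
  intro η hη
  classical
  set v : ℝ≥0 := Real.toNNReal (σe ^ 2) with hvdef
  have hv : v ≠ 0 := by
    rw [hvdef, ne_eq, Real.toNNReal_eq_zero, not_le]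
    positivity
  set m2 := gmom v 2 with hm2def
  set m4 := gmom v 4 with hm4def
  have hm2 : 0 < m2 := gmom_two_pos hv
  have hm4 : 0 ≤ m4 := gmom_even_nonneg v 2
  set s : Finset (Fin V) := Finset.univ.erase y with hsdef
  have hcard : s.card = V - 1 := by
    rw [hsdef, card_erase_of_mem (mem_univ y), card_univ, Fintype.card_fin]
  have hκpos' : 0 < s.card := by rw [hcard]; omega
  set κ : ℝ := (s.card : ℝ) with hκdef
  have hκ0 : 0 < κ := by rw [hκdef]; exact_mod_cast hκpos'
  set c₀ : ℝ := Real.exp η - 1 with hc₀def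
  have hc₀ : 0 < c₀ := by
    have := Real.add_one_le_exp η
    rw [hc₀def]; linarith
  set t : ℝ := Real.log (c₀ / κ) with htdef
  -- Step A : inclusion in a union of tail events
  have hsub : ∀ d : ℕ,
      {ω : Ω d | η < |Real.log (1 + ∑ i ∈ s,
        Real.exp (edot (e d y ω) (e d i ω) - edot (e d y ω) (e d y ω)))|}
      ⊆ ⋃ i ∈ s, {ω : Ω d |
          t < edot (e d y ω) (e d i ω) - edot (e d y ω) (e d y ω)} := by
    intro d ω hω
    simp only [Set.mem_setOf_eq] at hω
    set S := ∑ i ∈ s, Real.exp (edot (e d y ω) (e d i ω) - edot (e d y ω) (e d y ω)) with hSdef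
    have hS0 : 0 ≤ S := Finset.sum_nonneg fun i _ => (Real.exp_pos _).le
    have h1S : (0:ℝ) < 1 + S := by linarith
    have habs : |Real.log (1 + S)| = Real.log (1 + S) :=
      abs_of_nonneg (Real.log_nonneg (by linarith))
    rw [habs] at hω
    have hexp : c₀ < S := by
      have := (Real.lt_log_iff_exp_lt h1S).mp hω
      rw [hc₀def]; linarith
    have hex : ∃ i ∈ s, c₀ / κ <
        Real.exp (edot (e d y ω) (e d i ω) - edot (e d y ω) (e d y ω)) := by
      by_contra hcon
      push_neg at hcon
      have hle : S ≤ ∑ _i ∈ s, c₀ / κ := Finset.sum_le_sum hcon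
      rw [Finset.sum_const, nsmul_eq_mul, ← hκdef] at hle
      have : κ * (c₀ / κ) = c₀ := by field_simp
      rw [this] at hle
      linarith
    obtain ⟨i, hi, hgt⟩ := hex
    refine Set.mem_biUnion hi ?_
    simp only [Set.mem_setOf_eq]
    rw [htdef]
    exact (Real.log_lt_iff_lt_exp (by positivity)).mpr hgt
  -- choice of a dimension threshold
  obtain ⟨N, hN⟩ := exists_nat_ge (2 * |t| / m2 + 1)
  have hNd : ∀ d : ℕ, N ≤ d →
      0 < t + d * m2 ∧ (d:ℝ) * m2 / 2 ≤ t + d * m2 ∧ 0 < (d:ℝ) := by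
    intro d hd
    have hd' : 2 * |t| / m2 + 1 ≤ (d:ℝ) := le_trans hN (by exact_mod_cast hd)
    have h1 : 0 ≤ 2 * |t| / m2 := by positivity
    have hd1 : (1:ℝ) ≤ d := by linarith
    have h2 : 2 * |t| ≤ (d:ℝ) * m2 - m2 := by
      calc 2 * |t| = 2 * |t| / m2 * m2 := by field_simp
        _ ≤ ((d:ℝ) - 1) * m2 := by nlinarith
        _ = (d:ℝ) * m2 - m2 := by ring
    have habs : -t ≤ |t| := neg_le_abs t
    have habs2 : t ≤ |t| := le_abs_self t
    refine ⟨by nlinarith [abs_nonneg t], by nlinarith [abs_nonneg t], by linarith⟩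
  -- Step B : union bound + Chebyshev for each large dimension
  have hbound : ∀ d : ℕ, N ≤ d →
      P d {ω | η < |Real.log (1 + ∑ i ∈ s,
        Real.exp (edot (e d y ω) (e d i ω) - edot (e d y ω) (e d y ω)))|}
      ≤ ENNReal.ofReal (κ * ((d:ℝ) * m4 / (t + d * m2) ^ 2)) := by
    intro d hd
    haveI := hP d
    obtain ⟨hc, -, -⟩ := hNd d hd
    have hb0 : 0 ≤ (d:ℝ) * m4 / (t + d * m2) ^ 2 :=
      div_nonneg (mul_nonneg (Nat.cast_nonneg d) hm4) (sq_nonneg _)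
    have hper : ∀ i ∈ s,
        P d {ω | t < edot (e d y ω) (e d i ω) - edot (e d y ω) (e d y ω)}
        ≤ ENNReal.ofReal ((d:ℝ) * m4 / (t + d * m2) ^ 2) := by
      intro i hi
      have hiy : i ≠ y := by
        rw [hsdef] at hi
        exact Finset.ne_of_mem_erase hi
      have hset : {ω : Ω d | t < edot (e d y ω) (e d i ω) - edot (e d y ω) (e d y ω)}
          = {ω : Ω d | t < ∑ j, (e d y ω j * e d i ω j - e d y ω j * e d y ω j)} := by
        ext ω
        simp [edot, Finset.sum_sub_distrib]
      rw [hset]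
      refine sum_tail hv (fun j => he_meas d y j) (fun j => he_meas d i j)
        (fun j => he_law d y j) (fun j => he_law d i j) ?_ ?_ t hc
      · intro j
        exact (he_indep d).indepFun
          (show ((y, j) : Fin V × Fin d) ≠ (i, j) from
            fun h => hiy (congrArg Prod.fst h).symm)
      · intro j k hjk
        have hmeas : ∀ p : Fin V × Fin d, Measurable (fun ω => e d p.1 ω p.2) :=
          fun p => he_meas d p.1 p.2
        have hφ : Measurable (fun p : ℝ × ℝ => p.1 * p.2 - p.1 * p.1) := by fun_prop
        have hpair := (he_indep d).indepFun_prodMk_prodMk hmeas (y, j) (i, j) (y, k) (i, k)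
          (fun h => hjk (congrArg Prod.snd h))
          (fun h => hiy (congrArg Prod.fst h).symm)
          (fun h => hiy (congrArg Prod.fst h))
          (fun h => hjk (congrArg Prod.snd h))
        exact hpair.comp hφ hφ
    calc P d {ω | η < |Real.log (1 + ∑ i ∈ s,
            Real.exp (edot (e d y ω) (e d i ω) - edot (e d y ω) (e d y ω)))|}
        ≤ P d (⋃ i ∈ s, {ω : Ω d |
            t < edot (e d y ω) (e d i ω) - edot (e d y ω) (e d y ω)}) :=
          measure_mono (hsub d)
      _ ≤ ∑ i ∈ s, P d {ω : Ω d |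
            t < edot (e d y ω) (e d i ω) - edot (e d y ω) (e d y ω)} :=
          measure_biUnion_finset_le _ _
      _ ≤ ∑ _i ∈ s, ENNReal.ofReal ((d:ℝ) * m4 / (t + d * m2) ^ 2) :=
          Finset.sum_le_sum hper
      _ = s.card • ENNReal.ofReal ((d:ℝ) * m4 / (t + d * m2) ^ 2) := by
          rw [Finset.sum_const]
      _ = ENNReal.ofReal (κ * ((d:ℝ) * m4 / (t + d * m2) ^ 2)) := by
          rw [nsmul_eq_mul, hκdef, ENNReal.ofReal_mul (by positivity),
            ENNReal.ofReal_natCast]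
  -- the explicit bound tends to zero
  set C : ℝ := κ * m4 * 4 / m2 ^ 2 with hCdef
  have hreal : Filter.Tendsto (fun d : ℕ => κ * ((d:ℝ) * m4 / (t + d * m2) ^ 2))
      Filter.atTop (nhds 0) := by
    apply squeeze_zero' ?_ ?_ (tendsto_const_div_atTop_nhds_zero_nat C)
    · filter_upwards with d
      exact mul_nonneg hκ0.le
        (div_nonneg (mul_nonneg (Nat.cast_nonneg d) hm4) (sq_nonneg _))
    · filter_upwards [Filter.eventually_ge_atTop N] with d hd
      obtain ⟨hc, hhalf, hdpos⟩ := hNd d hd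
      have h1 : 0 < (d:ℝ) * m2 / 2 := by positivity
      have hsq : ((d:ℝ) * m2 / 2) ^ 2 ≤ (t + d * m2) ^ 2 := by
        apply sq_le_sq'
        · nlinarith
        · exact hhalf
      have h2 : (d:ℝ) * m4 / (t + d * m2) ^ 2 ≤ (d:ℝ) * m4 / ((d:ℝ) * m2 / 2) ^ 2 :=
        div_le_div_of_nonneg_left (mul_nonneg (Nat.cast_nonneg d) hm4)
          (by positivity) hsq
      have h3 : κ * ((d:ℝ) * m4 / ((d:ℝ) * m2 / 2) ^ 2) = C / d := by
        rw [hCdef]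
        field_simp
        ring
      calc κ * ((d:ℝ) * m4 / (t + d * m2) ^ 2)
          ≤ κ * ((d:ℝ) * m4 / ((d:ℝ) * m2 / 2) ^ 2) :=
            mul_le_mul_of_nonneg_left h2 hκ0.le
        _ = C / d := h3
  have hofreal : Filter.Tendsto
      (fun d : ℕ => ENNReal.ofReal (κ * ((d:ℝ) * m4 / (t + d * m2) ^ 2)))
      Filter.atTop (nhds 0) := by
    have := ENNReal.tendsto_ofReal hreal
    simpa using this
  apply tendsto_of_tendsto_of_tendsto_of_le_of_le' tendsto_const_nhds hofreal
  · exact Filter.Eventually.of_forall fun d => zero_le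
  · filter_upwards [Filter.eventually_ge_atTop N] with d hd using hbound d hd
end
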